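/- arXiv:1603.05811 — 6 statements merged into one kernel-verified Lean document; each statement's English description precedes it below -/
import Mathlib

section
/- For a prime p and positive integers n, j with n < p and j < p, the sum $\sum_{i=0}^{p-1} i^n \zeta_p^{ij}$ is congruent to $\frac{(-1)^{n-1} n! \, p}{j^n (\zeta_p - 1)^n}$ modulo the ideal generated by $\frac{p}{(\zeta_p - 1)^{n-1}}$ in $\mathbb{Z}_{(p)}[\zeta_p]$. -/
/-- The subring `ℤ_(p)[ζ]` of a field `K`: the subring generated by `ζ` together with all
rational numbers whose denominator is prime to `p` (i.e. the localization `ℤ_(p)` of `ℤ`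
at the prime ideal `pℤ`, viewed inside `K`). -/
def ZpLocAdjoin (p : ℕ) {K : Type*} [Field K] (ζ : K) : Subring K :=
  Subring.closure ({ζ} ∪ {x : K | ∃ a b : ℤ, ¬ (p : ℤ) ∣ b ∧ (b : K) * x = (a : K)})


open Finset Polynomial

section NT

variable {p : ℕ}

lemma sum_range_zmod [NeZero p] {M : Type*} [AddCommMonoid M] (f : ZMod p → M) :
    ∑ i ∈ range p, f (i : ZMod p) = ∑ x : ZMod p, f x := by
  exact Finset.sum_nbij' (fun i => (i : ZMod p)) ZMod.val (fun a _ => mem_univ _)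
    (fun x _ => mem_range.mpr (ZMod.val_lt x))
    (fun a ha => ZMod.val_cast_of_lt (mem_range.mp ha))
    (fun x _ => ZMod.natCast_rightInverse x) (fun a _ => rfl)

lemma sum_pow_zmod [hpf : Fact p.Prime] (d : ℕ) (hd : d ≤ p - 1) :
    ∑ x : ZMod p, x ^ d = if d = p - 1 then -1 else 0 := by
  have hp := hpf.out
  have hp1 : 1 < p := hp.one_lt
  rcases eq_or_lt_of_le hd with h | h
  · rw [if_pos h]
    have h0 : (0 : ZMod p) ^ d = 0 := by
      rw [h]; exact zero_pow (by omega)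
    rw [← Finset.sum_subset (Finset.subset_univ ({0}ᶜ : Finset (ZMod p)))]
    · have : ∀ x ∈ ({0}ᶜ : Finset (ZMod p)), x ^ d = 1 := by
        intro x hx
        rw [h]
        exact ZMod.pow_card_sub_one_eq_one (by simpa using hx)
      rw [Finset.sum_congr rfl this, Finset.sum_const, Finset.card_compl,
        Finset.card_singleton, ZMod.card, nsmul_eq_mul, mul_one]
      have : ((p - 1 : ℕ) : ZMod p) = (p : ZMod p) - 1 := by
        have := Nat.cast_sub (by omega : 1 ≤ p) (R := ZMod p)
        simpa using this
      rw [this, ZMod.natCast_self, zero_sub]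
    · intro x _ hx
      simp only [Finset.mem_compl, Finset.mem_singleton, not_not] at hx
      rw [hx, h0]
  · rw [if_neg (by omega)]
    exact FiniteField.sum_pow_lt_card_sub_one (K := ZMod p) d (by rwa [ZMod.card])

end NT

section NT2
variable {p : ℕ}

lemma keyNT [hpf : Fact p.Prime] {n k : ℕ} (hn : n ≤ p - 1) (hk : k ≤ p - 1 - n) :
    (∑ i ∈ range p, (i : ZMod p) ^ n * (Nat.descFactorial i k : ZMod p))
      = if k = p - 1 - n then -1 else 0 := by
  have hp := hpf.out
  have hp1 : 1 < p := hp.one_lt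
  set P : (ZMod p)[X] := X ^ n * descPochhammer (ZMod p) k with hP
  have hdeg : P.natDegree = n + k := by
    rw [hP, natDegree_mul (pow_ne_zero n X_ne_zero) (monic_descPochhammer _ _).ne_zero,
      natDegree_X_pow, descPochhammer_natDegree]
  have hdeglt : P.natDegree < p := by omega
  have heval : ∀ i : ℕ, (i : ZMod p) ^ n * (Nat.descFactorial i k : ZMod p)
      = P.eval (i : ZMod p) := by
    intro i
    rw [hP, eval_mul, eval_pow, eval_X, descPochhammer_eval_eq_descFactorial]
  calc ∑ i ∈ range p, (i : ZMod p) ^ n * (Nat.descFactorial i k : ZMod p)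
      = ∑ i ∈ range p, P.eval (i : ZMod p) := by
        exact Finset.sum_congr rfl fun i _ => heval i
    _ = ∑ x : ZMod p, P.eval x := sum_range_zmod (fun x => P.eval x)
    _ = ∑ x : ZMod p, ∑ d ∈ range p, P.coeff d * x ^ d := by
        exact Finset.sum_congr rfl fun x _ => eval_eq_sum_range' hdeglt x
    _ = ∑ d ∈ range p, P.coeff d * ∑ x : ZMod p, x ^ d := by
        rw [Finset.sum_comm]
        exact Finset.sum_congr rfl fun d _ => by rw [Finset.mul_sum]
    _ = ∑ d ∈ range p, P.coeff d * (if d = p - 1 then -1 else 0) := by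
        refine Finset.sum_congr rfl fun d hd => ?_
        rw [sum_pow_zmod d (by have := mem_range.mp hd; omega)]
    _ = P.coeff (p - 1) * (-1) := by
        rw [Finset.sum_eq_single (p - 1)]
        · rw [if_pos rfl]
        · intro d _ hd; rw [if_neg hd, mul_zero]
        · intro h; exact absurd (mem_range.mpr (by omega)) h
    _ = if k = p - 1 - n then -1 else 0 := by
        rcases eq_or_lt_of_le hk with h | h
        · rw [if_pos h]
          have hmono : P.Monic := (monic_X_pow n).mul (monic_descPochhammer _ _)
          have : P.coeff (p - 1) = 1 := by
            have : P.natDegree = p - 1 := by omega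
            rw [← this]; exact hmono.coeff_natDegree
          rw [this, one_mul]
        · rw [if_neg (by omega), coeff_eq_zero_of_natDegree_lt (by omega), zero_mul]
end NT2

section NT3
variable {p : ℕ}

lemma factNT [hpf : Fact p.Prime] : ∀ n, n ≤ p - 1 →
    ((n.factorial : ZMod p) * ((p - 1 - n).factorial : ZMod p)) = (-1) ^ (n + 1) := by
  have hp := hpf.out
  have hp1 : 1 < p := hp.one_lt
  intro n
  induction n with
  | zero =>
    intro _
    simp only [Nat.factorial_zero, Nat.cast_one, one_mul, Nat.sub_zero, pow_one]
    simpa using ZMod.wilsons_lemma p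
  | succ n ih =>
    intro hn1
    have hn : n ≤ p - 1 := by omega
    have key := ih hn
    have hsub : p - 1 - n = (p - 1 - (n + 1)) + 1 := by omega
    have hcast : ((p - 1 - n : ℕ) : ZMod p) = -((n : ZMod p) + 1) := by
      have : ((p - 1 - n : ℕ) : ZMod p) = ((p : ℕ) : ZMod p) - ((n + 1 : ℕ) : ZMod p) := by
        rw [← Nat.cast_sub (by omega)]
        congr 1
        omega
      rw [this, ZMod.natCast_self, zero_sub]
      push_cast
      ring
    have hne : ((n : ZMod p) + 1) ≠ 0 := by
      have : ((n + 1 : ℕ) : ZMod p) ≠ 0 := by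
        rw [Ne, ZMod.natCast_eq_zero_iff]
        intro hdvd
        have := Nat.le_of_dvd (by omega) hdvd
        omega
      push_cast at this
      exact this
    rw [hsub, Nat.factorial_succ] at key
    push_cast at key
    -- key : (n+1) * n! * ((p-1-(n+1)+1) * (p-1-(n+1))!) = (-1)^(n+1)
    have hcast2 : ((p - 1 - (n + 1) : ℕ) : ZMod p) + 1 = -((n : ZMod p) + 1) := by
      rw [← hcast]
      rw_mod_cast [← hsub]
    have hfs : ((n + 1).factorial : ZMod p) = ((n : ZMod p) + 1) * (n.factorial : ZMod p) := by
      rw [Nat.factorial_succ]; push_cast; ring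
    rw [hfs]
    linear_combination ((n.factorial : ZMod p) * ((p - 1 - (n+1)).factorial : ZMod p)) * hcast2 - key
end NT3

section CT
variable {K : Type*} [Field K]

/-- congruence mod `t` relative to subring `R`. -/
def CtP (R : Subring K) (t x y : K) : Prop := ∃ r ∈ R, x - y = t * r

namespace CtP
variable {R : Subring K} {t : K}

lemma refl (x : K) : CtP R t x x := ⟨0, zero_mem R, by ring⟩

lemma sub {x y x' y' : K} (h : CtP R t x y) (h' : CtP R t x' y') :
    CtP R t (x - x') (y - y') := by
  obtain ⟨r, hr, e⟩ := h
  obtain ⟨r', hr', e'⟩ := h'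
  exact ⟨r - r', sub_mem hr hr', by linear_combination e - e'⟩

lemma mul {x y x' y' : K} (hx : x ∈ R) (hy' : y' ∈ R) (h : CtP R t x y)
    (h' : CtP R t x' y') : CtP R t (x * x') (y * y') := by
  obtain ⟨r, hr, e⟩ := h
  obtain ⟨r', hr', e'⟩ := h'
  exact ⟨x * r' + r * y', add_mem (mul_mem hx hr') (mul_mem hr hy'),
    by linear_combination x * e' + y' * e⟩

lemma prod {ι : Type*} (s : Finset ι) (f g : ι → K) (hf : ∀ i ∈ s, f i ∈ R)
    (hg : ∀ i ∈ s, g i ∈ R) (h : ∀ i ∈ s, CtP R t (f i) (g i)) :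
    CtP R t (∏ i ∈ s, f i) (∏ i ∈ s, g i) := by
  induction s using Finset.cons_induction with
  | empty => simpa using CtP.refl 1
  | cons a s ha ih =>
    rw [Finset.prod_cons, Finset.prod_cons]
    exact CtP.mul (hf a (Finset.mem_cons_self a s))
      (Subring.prod_mem R fun i hi => hg i (Finset.mem_cons_of_mem hi))
      (h a (Finset.mem_cons_self a s))
      (ih (fun i hi => hf i (Finset.mem_cons_of_mem hi))
        (fun i hi => hg i (Finset.mem_cons_of_mem hi))
        (fun i hi => h i (Finset.mem_cons_of_mem hi)))

lemma pow {x y : K} (hx : x ∈ R) (hy : y ∈ R) (h : CtP R t x y) (k : ℕ) :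
    CtP R t (x ^ k) (y ^ k) := by
  have := CtP.prod (R := R) (t := t) (Finset.range k) (fun _ => x) (fun _ => y)
    (fun _ _ => hx) (fun _ _ => hy) (fun _ _ => h)
  simpa using this

end CtP
end CT

section COR
open Nat
variable {p n j : ℕ}

lemma keyNT' [hpf : Fact p.Prime] (hn : n ≤ p - 1) {k : ℕ} (hk : k ≤ p - 1 - n) :
    ((k.factorial * ∑ i ∈ range p, i ^ n * i.choose k : ℕ) : ZMod p)
      = if k = p - 1 - n then -1 else 0 := by
  rw [← keyNT (p := p) (n := n) hn hk]
  push_cast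
  rw [Finset.mul_sum]
  refine Finset.sum_congr rfl fun i _ => ?_
  rw [Nat.descFactorial_eq_factorial_mul_choose]
  push_cast
  ring

lemma factorial_ne_zero_zmod [hpf : Fact p.Prime] {k : ℕ} (hk : k < p) :
    ((k.factorial : ZMod p)) ≠ 0 := by
  rw [Ne, ZMod.natCast_eq_zero_iff]
  intro h
  exact absurd (hpf.out.dvd_factorial.mp h) (by omega)

lemma corA [hpf : Fact p.Prime] (hn : n ≤ p - 1) {k : ℕ} (hk : k < p - 1 - n) :
    p ∣ ∑ i ∈ range p, i ^ n * i.choose k := by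
  have h := keyNT' (p := p) (n := n) hn (le_of_lt hk)
  rw [if_neg (by omega), ZMod.natCast_eq_zero_iff] at h
  rcases (Nat.Prime.dvd_mul hpf.out).mp h with h' | h'
  · exact absurd (hpf.out.dvd_factorial.mp h') (by omega)
  · exact h'

lemma corG [hpf : Fact p.Prime] (hn0 : 0 < n) (hn : n < p) (hj0 : 0 < j) (hj : j < p) :
    (p : ℤ) ∣ ((∑ i ∈ range p, i ^ n * i.choose (p - 1 - n) : ℕ) : ℤ)
        * (j : ℤ) ^ (n + (p - 1 - n)) * (-1) ^ (p - 1)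
        * ((∏ k ∈ range (p - 1), (((k + 1 : ℕ) : ZMod p)⁻¹).val : ℕ) : ℤ)
      - (-1) ^ (n - 1) * (n.factorial : ℤ) := by
  have hp := hpf.out
  have hp1 : 1 < p := hp.one_lt
  rw [← ZMod.intCast_zmod_eq_zero_iff_dvd]
  simp only [Int.cast_sub, Int.cast_mul, Int.cast_pow, Int.cast_neg, Int.cast_one,
    Int.cast_natCast]
  have hFa : (((p - 1 - n).factorial : ℕ) : ZMod p)
      * ((∑ i ∈ range p, i ^ n * i.choose (p - 1 - n) : ℕ) : ZMod p) = -1 := by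
    have h := keyNT' (p := p) (n := n) (by omega) (le_refl (p - 1 - n))
    rw [if_pos rfl] at h
    rw [← Nat.cast_mul]
    exact h
  have hFne : (((p - 1 - n).factorial : ℕ) : ZMod p) ≠ 0 :=
    factorial_ne_zero_zmod (by omega)
  have hjpow : ((j : ZMod p)) ^ (n + (p - 1 - n)) = 1 := by
    have he : n + (p - 1 - n) = p - 1 := by omega
    rw [he]
    refine ZMod.pow_card_sub_one_eq_one ?_
    rw [Ne, ZMod.natCast_eq_zero_iff]
    intro h
    exact absurd (Nat.le_of_dvd hj0 h) (by omega)
  have hN : ((∏ k ∈ range (p - 1), (((k + 1 : ℕ) : ZMod p)⁻¹).val : ℕ) : ZMod p) = -1 := by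
    rw [Nat.cast_prod]
    have hc : ∀ k ∈ range (p - 1), (((((k + 1 : ℕ) : ZMod p)⁻¹).val : ℕ) : ZMod p)
        = ((k + 1 : ℕ) : ZMod p)⁻¹ := fun k _ => ZMod.natCast_rightInverse _
    rw [Finset.prod_congr rfl hc, Finset.prod_inv_distrib]
    have hfac : (∏ k ∈ range (p - 1), ((k + 1 : ℕ) : ZMod p))
        = (((p - 1).factorial : ℕ) : ZMod p) := by
      rw [← Finset.prod_range_add_one_eq_factorial, Nat.cast_prod]
    rw [hfac, ZMod.wilsons_lemma]
    norm_num
  have hsign : ((-1 : ZMod p)) ^ (p - 1) = 1 := by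
    rcases hp.eq_two_or_odd' with h2 | hodd
    · subst h2
      norm_num
      rfl
    · have hev : Even (p - 1) := by
        rcases hodd with ⟨m, hm⟩
        exact ⟨m, by omega⟩
      exact hev.neg_one_pow
  have hfact : ((n.factorial : ℕ) : ZMod p) * (((p - 1 - n).factorial : ℕ) : ZMod p)
      = (-1) ^ (n + 1) := factNT n (by omega)
  rw [hjpow, hsign, hN]
  set a := ((∑ i ∈ range p, i ^ n * i.choose (p - 1 - n) : ℕ) : ZMod p) with ha
  set F := (((p - 1 - n).factorial : ℕ) : ZMod p) with hF
  have expand : F * (a * 1 * 1 * -1 - (-1) ^ (n - 1) * ((n.factorial : ℕ) : ZMod p))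
      = -(F * a) - (-1) ^ (n - 1) * (((n.factorial : ℕ) : ZMod p) * F) := by ring
  have hFG : F * (a * 1 * 1 * -1 - (-1) ^ (n - 1) * ((n.factorial : ℕ) : ZMod p)) = 0 := by
    rw [expand, hFa, hfact, ← pow_add]
    have h2n : n - 1 + (n + 1) = 2 * n := by omega
    rw [h2n, pow_mul]
    norm_num
  exact (mul_eq_zero.mp hFG).resolve_left hFne
end COR


open Finset

section MAIN
variable {K : Type*} [Field K]

/-- extra CtP lemma -/
lemma CtP_trans {R : Subring K} {t x y z : K} (h : CtP R t x y) (h' : CtP R t y z) :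
    CtP R t x z := by
  obtain ⟨r, hr, e⟩ := h
  obtain ⟨r', hr', e'⟩ := h'
  exact ⟨r + r', add_mem hr hr', by linear_combination e + e'⟩

end MAIN

/-- For a prime `p`, a primitive `p`-th root of unity `ζ`, and positive integers `n, j < p`,
the sum `∑_{i=0}^{p-1} i^n ζ^{ij}` is congruent to `(-1)^(n-1) n! p / (j^n (ζ-1)^n)` modulo
the ideal generated by `p / (ζ-1)^(n-1)` in `ℤ_(p)[ζ]`. -/
theorem sum_pow_zeta_congr (p : ℕ) (hp : p.Prime) (K : Type*) [Field K] [CharZero K]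
    (ζ : K) (hζ : IsPrimitiveRoot ζ p) (n j : ℕ) (hn0 : 0 < n) (hn : n < p)
    (hj0 : 0 < j) (hj : j < p) :
    ∃ c ∈ ZpLocAdjoin p ζ,
      (∑ i ∈ Finset.range p, (i : K) ^ n * ζ ^ (i * j))
        - ((-1 : K) ^ (n - 1) * (Nat.factorial n : K) * (p : K)) / ((j : K) ^ n * (ζ - 1) ^ n)
      = c * ((p : K) / (ζ - 1) ^ (n - 1)) := by
  classical
  haveI : Fact p.Prime := ⟨hp⟩
  have hp1 : 1 < p := hp.one_lt
  set R := ZpLocAdjoin p ζ with hRdef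
  set t := ζ - 1 with htdef
  have hζp : ζ ^ p = 1 := hζ.pow_eq_one
  have hζ1 : ζ ≠ 1 := hζ.ne_one hp1
  have ht : t ≠ 0 := sub_ne_zero.mpr hζ1
  have hpK : (p : K) ≠ 0 := Nat.cast_ne_zero.mpr (by omega)
  have hjK : (j : K) ≠ 0 := Nat.cast_ne_zero.mpr (by omega)
  -- membership helpers
  have hζR : ζ ∈ R := Subring.subset_closure (Or.inl rfl)
  have htR : t ∈ R := sub_mem hζR (one_mem R)
  have hratR : ∀ a b : ℤ, ¬ (p : ℤ) ∣ b → ((a : K) / (b : K)) ∈ R := by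
    intro a b hb
    have hb0 : (b : K) ≠ 0 := by
      intro h
      rw [Int.cast_eq_zero] at h
      exact hb (h ▸ dvd_zero _)
    exact Subring.subset_closure (Or.inr ⟨a, b, hb, by field_simp⟩)
  have hintR : ∀ a : ℤ, (a : K) ∈ R := by
    intro a
    have h1 : ¬ (p : ℤ) ∣ 1 := by
      intro hd
      have h2 : (p : ℤ) ≤ 1 := Int.le_of_dvd one_pos hd
      omega
    simpa using hratR a 1 h1
  have hnatR : ∀ a : ℕ, (a : K) ∈ R := by
    intro a
    have := hintR a
    simpa using this
  have hinvR : ∀ b : ℕ, ¬ p ∣ b → ((b : K))⁻¹ ∈ R := by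
    intro b hb
    have := hratR 1 b (by exact_mod_cast hb)
    simpa using this
  -- geometric sums
  set W : ℕ → K := fun e => ∑ l ∈ range e, ζ ^ l with hWdef
  have hWR : ∀ e : ℕ, W e ∈ R := fun e =>
    Subring.sum_mem R fun l _ => Subring.pow_mem R hζR l
  have hgeom : ∀ e : ℕ, ζ ^ e - 1 = t * W e := by
    intro e
    rw [htdef, hWdef, mul_comm]
    exact (geom_sum_mul ζ e).symm
  set s : K := ζ ^ j - 1 with hsdef
  have hsR : s ∈ R := sub_mem (Subring.pow_mem R hζR j) (one_mem R)
  set w : K := W j with hwdef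
  have hwR : w ∈ R := hWR j
  have hs : s = t * w := hgeom j
  -- expansion of the sum
  set A : ℕ → ℕ := fun k => ∑ i ∈ range p, i ^ n * i.choose k with hAdef
  have hS : (∑ i ∈ Finset.range p, (i : K) ^ n * ζ ^ (i * j))
      = ∑ k ∈ range p, (A k : K) * s ^ k := by
    have hterm : ∀ i ∈ range p, (i : K) ^ n * ζ ^ (i * j)
        = ∑ k ∈ range p, (i : K) ^ n * (i.choose k : K) * s ^ k := by
      intro i hi
      have h1 : ζ ^ (i * j) = (ζ ^ j) ^ i := by rw [mul_comm, pow_mul]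
      have h2 : ζ ^ j = s + 1 := by rw [hsdef]; ring
      have h3 : (s + 1) ^ i = ∑ k ∈ range (i + 1), s ^ k * (i.choose k : K) := by
        rw [add_pow]
        exact Finset.sum_congr rfl fun k _ => by rw [one_pow, mul_one]
      have h4 : (∑ k ∈ range (i + 1), s ^ k * (i.choose k : K))
          = ∑ k ∈ range p, s ^ k * (i.choose k : K) := by
        apply Finset.sum_subset
        · intro x hx
          rw [mem_range] at hx ⊢
          have hi' := mem_range.mp hi
          omega
        · intro k _ hk
          rw [mem_range, not_lt] at hk
          rw [Nat.choose_eq_zero_of_lt (by omega), Nat.cast_zero, mul_zero]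
      rw [h1, h2, h3, h4, Finset.mul_sum]
      exact Finset.sum_congr rfl fun k _ => by ring
    rw [Finset.sum_congr rfl hterm, Finset.sum_comm]
    refine Finset.sum_congr rfl fun k _ => ?_
    rw [hAdef]
    push_cast
    rw [Finset.sum_mul]
    -- inverses mod p
  set inv : ℕ → ℕ := fun k => ((k : ZMod p)⁻¹).val with hinvdef
  set y : ℕ → K := fun k => ∑ i ∈ range (inv k), ζ ^ (k * i) with hydef
  have hyR : ∀ k, y k ∈ R := fun k => Subring.sum_mem R fun i _ => Subring.pow_mem R hζR _
  have hy : ∀ k, 0 < k → k < p → (ζ ^ k - 1) * y k = t := by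
    intro k hk0 hkp
    have hkz : ((k : ℕ) : ZMod p) ≠ 0 := by
      rw [Ne, ZMod.natCast_eq_zero_iff]
      intro h
      exact absurd (Nat.le_of_dvd hk0 h) (by omega)
    have h1 : ((k * inv k : ℕ) : ZMod p) = ((1 : ℕ) : ZMod p) := by
      rw [hinvdef]
      push_cast
      rw [ZMod.natCast_val, ZMod.cast_id, mul_inv_cancel₀ hkz]
    have h2 : (k * inv k) % p = 1 % p := (ZMod.natCast_eq_natCast_iff _ _ _).mp h1
    have h1p : 1 % p = 1 := Nat.mod_eq_of_lt hp1
    have hdm := Nat.div_add_mod (k * inv k) p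
    have h3 : k * inv k = p * (k * inv k / p) + 1 := by omega
    have h4 : ζ ^ (k * inv k) = ζ := by
      rw [h3, pow_add, pow_mul, hζp, one_pow, pow_one, one_mul]
    have h5 : y k = ∑ i ∈ range (inv k), (ζ ^ k) ^ i := by
      rw [hydef]
      exact Finset.sum_congr rfl fun i _ => by rw [← pow_mul]
    rw [h5, mul_comm, geom_sum_mul, ← pow_mul, h4, htdef]
  -- product formula
  have hζ' : IsPrimitiveRoot ζ ((p - 1) + 1) := by
    have he : p - 1 + 1 = p := by omega
    rwa [he]
  have hprod : ∏ k ∈ range (p - 1), (1 - ζ ^ (k + 1)) = (p : K) := by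
    rw [hζ'.prod_one_sub_pow_eq_order, Nat.cast_sub (by omega : 1 ≤ p)]
    push_cast
    ring
  set u : K := (-1 : K) ^ (p - 1) * ∏ k ∈ range (p - 1), W (k + 1) with hudef
  have huR : u ∈ R :=
    mul_mem (Subring.pow_mem R (neg_mem (one_mem R)) _)
      (Subring.prod_mem R fun k _ => hWR _)
  have hu : (p : K) = u * t ^ (p - 1) := by
    rw [← hprod, hudef]
    have h1 : ∀ k ∈ range (p - 1), (1 - ζ ^ (k + 1)) = (-1) * (t * W (k + 1)) := by
      intro k _
      rw [← hgeom (k + 1)]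
      ring
    rw [Finset.prod_congr rfl h1, Finset.prod_mul_distrib, Finset.prod_mul_distrib,
      Finset.prod_const, Finset.prod_const, card_range]
    ring
  set v : K := (-1 : K) ^ (p - 1) * ∏ k ∈ range (p - 1), y (k + 1) with hvdef
  have hvR : v ∈ R :=
    mul_mem (Subring.pow_mem R (neg_mem (one_mem R)) _)
      (Subring.prod_mem R fun k _ => hyR _)
  have hv : v * (p : K) = t ^ (p - 1) := by
    rw [← hprod, hvdef]
    have h1 : (∏ k ∈ range (p - 1), y (k + 1)) * ∏ k ∈ range (p - 1), (1 - ζ ^ (k + 1))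
        = ∏ k ∈ range (p - 1), ((-1) * ((ζ ^ (k + 1) - 1) * y (k + 1))) := by
      rw [← Finset.prod_mul_distrib]
      exact Finset.prod_congr rfl fun k _ => by ring
    calc (-1 : K) ^ (p - 1) * (∏ k ∈ range (p - 1), y (k + 1))
          * ∏ k ∈ range (p - 1), (1 - ζ ^ (k + 1))
        = (-1 : K) ^ (p - 1) * ∏ k ∈ range (p - 1),
            ((-1) * ((ζ ^ (k + 1) - 1) * y (k + 1))) := by
          rw [mul_assoc, h1]
      _ = (-1 : K) ^ (p - 1) * ((-1 : K) ^ (p - 1)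
            * ∏ k ∈ range (p - 1), ((ζ ^ (k + 1) - 1) * y (k + 1))) := by
          rw [Finset.prod_mul_distrib, Finset.prod_const, card_range]
      _ = ∏ k ∈ range (p - 1), t := by
          rw [Finset.prod_congr rfl (fun k hk => hy (k + 1) (by omega)
            (by have := mem_range.mp hk; omega)), ← mul_assoc, ← mul_pow]
          norm_num
      _ = t ^ (p - 1) := by rw [Finset.prod_const, card_range]
  -- congruences mod t
  have hCgeo : ∀ (c : ℕ) (d : ℕ → ℕ), CtP R t (∑ i ∈ range c, ζ ^ d i) (c : K) := by
    intro c d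
    refine ⟨∑ i ∈ range c, W (d i), Subring.sum_mem R fun i _ => hWR _, ?_⟩
    rw [Finset.mul_sum]
    have h1 : (∑ i ∈ range c, ζ ^ d i) - (c : K) = ∑ i ∈ range c, (ζ ^ d i - 1) := by
      rw [Finset.sum_sub_distrib, Finset.sum_const, card_range, nsmul_eq_mul, mul_one]
    rw [h1]
    exact Finset.sum_congr rfl fun i _ => hgeom (d i)
  have hCw : CtP R t w (j : K) := by
    have := hCgeo j (fun i => i)
    simpa [hwdef, hWdef] using this
  have hCy : ∀ k, CtP R t (y k) ((inv k : ℕ) : K) := by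
    intro k
    have := hCgeo (inv k) (fun i => k * i)
    simpa [hydef] using this
  set N : ℕ := ∏ k ∈ range (p - 1), inv (k + 1) with hNdef
  have hCv : CtP R t v ((-1 : K) ^ (p - 1) * (N : K)) := by
    refine CtP.mul (Subring.pow_mem R (neg_mem (one_mem R)) _) (hnatR N) (CtP.refl _) ?_
    have hprodC := CtP.prod (R := R) (t := t) (range (p - 1)) (fun k => y (k + 1))
      (fun k => ((inv (k + 1) : ℕ) : K)) (fun k _ => hyR _) (fun k _ => hnatR _)
      (fun k _ => hCy (k + 1))
    rw [hNdef]
    push_cast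
    exact hprodC
  have hCpow : CtP R t (w ^ (p - 1 - n)) ((j : K) ^ (p - 1 - n)) :=
    CtP.pow hwR (hnatR j) hCw _
    -- piece 1 : low terms
  set a : ℕ → ℕ := fun k => A k / p with hadef
  have hak : ∀ k, k < p - 1 - n → (A k : K) = (p : K) * (a k : K) := by
    intro k hk
    have hdvd : p ∣ A k := corA (by omega) hk
    rw [hadef]
    rw [← Nat.cast_mul, Nat.mul_div_cancel' hdvd]
  set c₁ : K := ∑ k ∈ range (p - 1 - n), (a k : K) * s ^ k * t ^ (n - 1) with hc₁def
  have hc₁R : c₁ ∈ R := Subring.sum_mem R fun k _ =>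
    mul_mem (mul_mem (hnatR _) (Subring.pow_mem R hsR _)) (Subring.pow_mem R htR _)
  have E1 : (∑ k ∈ range (p - 1 - n), (A k : K) * s ^ k) = c₁ * ((p : K) / t ^ (n - 1)) := by
    rw [hc₁def, Finset.sum_mul]
    refine Finset.sum_congr rfl fun k hk => ?_
    rw [hak k (mem_range.mp hk)]
    field_simp
  -- piece 3 : high terms
  set c₃ : K := ∑ k ∈ Ico (p - n) p, (A k : K) * w ^ k * t ^ (k - (p - n)) * v with hc₃def
  have hc₃R : c₃ ∈ R := Subring.sum_mem R fun k _ =>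
    mul_mem (mul_mem (mul_mem (hnatR _) (Subring.pow_mem R hwR _))
      (Subring.pow_mem R htR _)) hvR
  have E3 : (∑ k ∈ Ico (p - n) p, (A k : K) * s ^ k) = c₃ * ((p : K) / t ^ (n - 1)) := by
    rw [hc₃def, Finset.sum_mul]
    refine Finset.sum_congr rfl fun k hk => ?_
    obtain ⟨hk1, hk2⟩ := mem_Ico.mp hk
    symm
    have hpow : t ^ (k - (p - n)) * t ^ (p - 1) = t ^ k * t ^ (n - 1) := by
      rw [← pow_add, ← pow_add]
      congr 1
      omega
    calc (A k : K) * w ^ k * t ^ (k - (p - n)) * v * ((p : K) / t ^ (n - 1))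
        = (A k : K) * w ^ k * (t ^ (k - (p - n)) * (v * (p : K))) / t ^ (n - 1) := by ring
      _ = (A k : K) * w ^ k * (t ^ (k - (p - n)) * t ^ (p - 1)) / t ^ (n - 1) := by rw [hv]
      _ = (A k : K) * w ^ k * (t ^ k * t ^ (n - 1)) / t ^ (n - 1) := by rw [hpow]
      _ = (A k : K) * (t ^ k * w ^ k) := by
          field_simp
      _ = (A k : K) * s ^ k := by rw [← mul_pow, ← hs]
  -- piece 2 : the middle term
  have hGdvd := corG (p := p) (n := n) (j := j) hn0 hn hj0 hj
  have hCg : CtP R t ((A (p - 1 - n) : K) * (j : K) ^ n * (w ^ (p - 1 - n) * v))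
      ((A (p - 1 - n) : K) * (j : K) ^ n
        * ((j : K) ^ (p - 1 - n) * ((-1 : K) ^ (p - 1) * (N : K)))) := by
    refine CtP.mul (mul_mem (hnatR _) (Subring.pow_mem R (hnatR j) n))
      (mul_mem (Subring.pow_mem R (hnatR j) _)
        (mul_mem (Subring.pow_mem R (neg_mem (one_mem R)) _) (hnatR N)))
      (CtP.refl _) ?_
    exact CtP.mul (Subring.pow_mem R hwR _)
      (mul_mem (Subring.pow_mem R (neg_mem (one_mem R)) _) (hnatR N)) hCpow hCv
  have hGcast : ((((∑ i ∈ range p, i ^ n * i.choose (p - 1 - n) : ℕ) : ℤ)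
        * (j : ℤ) ^ (n + (p - 1 - n)) * (-1) ^ (p - 1)
        * ((∏ k ∈ range (p - 1), (((k + 1 : ℕ) : ZMod p)⁻¹).val : ℕ) : ℤ)
      - (-1) ^ (n - 1) * (n.factorial : ℤ) : ℤ) : K)
      = (A (p - 1 - n) : K) * (j : K) ^ n
          * ((j : K) ^ (p - 1 - n) * ((-1 : K) ^ (p - 1) * (N : K)))
        - (-1 : K) ^ (n - 1) * (n.factorial : K) := by
    rw [hAdef, hNdef, hinvdef]
    push_cast [pow_add]
    ring
  have hCG : CtP R t ((A (p - 1 - n) : K) * (j : K) ^ n * (w ^ (p - 1 - n) * v)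
      - (-1 : K) ^ (n - 1) * (n.factorial : K)) 0 := by
    refine CtP_trans (CtP.sub hCg (CtP.refl ((-1 : K) ^ (n - 1) * (n.factorial : K)))) ?_
    rw [← hGcast]
    obtain ⟨z, hz⟩ := hGdvd
    refine ⟨u * t ^ (p - 2) * (z : K), mul_mem (mul_mem huR (Subring.pow_mem R htR _))
      (hintR z), ?_⟩
    have hu' : (p : K) = u * (t ^ (p - 2) * t) := by
      rw [show p - 1 = (p - 2) + 1 by omega, pow_succ] at hu
      exact hu
    rw [hz]
    push_cast
    linear_combination (z : K) * hu'
  obtain ⟨r, hrR, hre⟩ := hCG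
  rw [sub_zero] at hre
  set c₂ : K := ((j : K) ^ n)⁻¹ * r with hc₂def
  have hc₂R : c₂ ∈ R := by
    refine mul_mem ?_ hrR
    have hnd : ¬ p ∣ j ^ n := by
      intro hd
      exact absurd (Nat.le_of_dvd hj0 (hp.dvd_of_dvd_pow hd)) (by omega)
    have := hinvR (j ^ n) hnd
    rwa [Nat.cast_pow] at this
  have E2 : (A (p - 1 - n) : K) * s ^ (p - 1 - n)
      - ((-1 : K) ^ (n - 1) * (n.factorial : K) * (p : K)) / ((j : K) ^ n * t ^ n)
      = c₂ * ((p : K) / t ^ (n - 1)) := by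
    have h1 : s ^ (p - 1 - n) = t ^ (p - 1 - n) * w ^ (p - 1 - n) := by rw [hs, mul_pow]
    have h2 : t ^ (p - 1 - n) * t ^ n = t ^ (p - 1) := by
      rw [← pow_add]
      congr 1
      omega
    have h3 : t ^ n = t * t ^ (n - 1) := by
      rw [← pow_succ']
      congr 1
      omega
    rw [hc₂def, h1]
    field_simp
    linear_combination ((p : K) * t ^ (n - 1)) * hre
      - ((A (p - 1 - n) : K) * (j : K) ^ n * t ^ (n - 1) * w ^ (p - 1 - n)) * hv
      + ((A (p - 1 - n) : K) * (j : K) ^ n * t ^ (n - 1) * w ^ (p - 1 - n)) * h2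
      - (r * (p : K)) * h3
  -- assembling everything
  have hsplit : (∑ k ∈ range p, (A k : K) * s ^ k)
      = (∑ k ∈ range (p - 1 - n), (A k : K) * s ^ k)
        + (A (p - 1 - n) : K) * s ^ (p - 1 - n)
        + ∑ k ∈ Ico (p - n) p, (A k : K) * s ^ k := by
    rw [← Finset.sum_range_add_sum_Ico _ (show p - n ≤ p by omega),
      show p - n = (p - 1 - n) + 1 by omega, Finset.sum_range_succ]
  refine ⟨c₁ + c₂ + c₃, add_mem (add_mem hc₁R hc₂R) hc₃R, ?_⟩
  have hdistr : (c₁ + c₂ + c₃) * ((p : K) / t ^ (n - 1))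
      = c₁ * ((p : K) / t ^ (n - 1)) + c₂ * ((p : K) / t ^ (n - 1))
        + c₃ * ((p : K) / t ^ (n - 1)) := by ring
  rw [hS, hsplit, hdistr, ← E1, ← E3, ← E2]
  ring
end

section
/- For a prime number p, the element $(\zeta_p - 1)^{p-1}$ is congruent to $-p$ modulo the ideal generated by $p(\zeta_p - 1)$ in $\mathbb{Z}[\zeta_p]$. -/
/-- For a prime `p` and a primitive `p`-th root of unity `ζ`, the element `(ζ - 1)^(p-1)` is
congruent to `-p` modulo the ideal generated by `p(ζ - 1)` in `ℤ[ζ]` (realized as the subring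
generated by `ζ` in a characteristic-zero field). -/
theorem zeta_sub_one_pow_congr (p : ℕ) (hp : p.Prime) (K : Type*) [Field K] [CharZero K]
    (ζ : K) (hζ : IsPrimitiveRoot ζ p) :
    ∃ c ∈ Subring.closure {ζ}, (ζ - 1) ^ (p - 1) - (-(p : K)) = (p : K) * (ζ - 1) * c := by
  have hp2 : 2 ≤ p := hp.two_le
  set x : K := ζ - 1 with hxdef
  have hx : x ≠ 0 := by
    have := hζ.ne_one hp.one_lt
    simpa [hxdef, sub_eq_zero] using this
  have hzp : ζ ^ p = 1 := hζ.pow_eq_one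
  have hsum : ∑ k ∈ Finset.range (p + 1), x ^ k * (p.choose k : K) = 1 := by
    have h := add_pow x 1 p
    simp only [one_pow, mul_one] at h
    rw [← h]
    simp [hxdef, hzp]
  have hsplit : x ^ p + (p : K) * x + ∑ k ∈ Finset.Ico 2 p, x ^ k * (p.choose k : K) = 0 := by
    rw [Finset.sum_range_succ] at hsum
    rw [Finset.range_eq_Ico, Finset.sum_eq_sum_Ico_succ_bot (by omega : 0 < p),
      Finset.sum_eq_sum_Ico_succ_bot (by omega : 1 < p)] at hsum
    simp only [pow_zero, pow_one, Nat.choose_zero_right, Nat.choose_one_right,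
      Nat.choose_self, Nat.cast_one, mul_one, one_mul] at hsum
    linear_combination hsum
  refine ⟨-∑ k ∈ Finset.Ico 2 p, ((p.choose k / p : ℕ) : K) * x ^ (k - 2), ?_, ?_⟩
  · have hζS : ζ ∈ Subring.closure {ζ} := Subring.subset_closure (Set.mem_singleton ζ)
    have hxS : x ∈ Subring.closure {ζ} := sub_mem hζS (one_mem _)
    exact neg_mem (sum_mem (fun k _ => mul_mem (natCast_mem _ _) (pow_mem hxS _)))
  · rw [sub_neg_eq_add]
    apply mul_left_cancel₀ hx
    have hpow : x * x ^ (p - 1) = x ^ p := by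
      rw [← pow_succ']
      congr 1
      omega
    have hterm : ∀ k ∈ Finset.Ico 2 p,
        x ^ k * (p.choose k : K) = (p : K) * x * (((p.choose k / p : ℕ) : K) * x ^ (k - 2)) * x := by
      intro k hk
      simp only [Finset.mem_Ico] at hk
      have hdvd : p ∣ p.choose k := hp.dvd_choose_self (by omega) hk.2
      have h1 : ((p.choose k / p : ℕ) : K) * (p : K) = (p.choose k : K) := by
        rw [← Nat.cast_mul, Nat.div_mul_cancel hdvd]
      have h2 : x ^ (k - 2) * x * x = x ^ k := by
        rw [← pow_succ, ← pow_succ]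
        congr 1
        omega
      calc x ^ k * (p.choose k : K) = (p.choose k : K) * (x ^ (k - 2) * x * x) := by
            rw [h2]; ring
        _ = _ := by rw [← h1]; ring
    rw [mul_add, hpow]
    have hR : (p : K) * x * ((-∑ k ∈ Finset.Ico 2 p, ((p.choose k / p : ℕ) : K) * x ^ (k - 2)) * x)
        = -∑ k ∈ Finset.Ico 2 p, x ^ k * (p.choose k : K) := by
      rw [neg_mul, mul_neg, Finset.sum_mul, Finset.mul_sum]
      congr 1
      refine Finset.sum_congr rfl fun k hk => ?_
      rw [hterm k hk]
      ring
    linear_combination hsplit - hR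
end

section
/- (Dilcher-type identity) Let $\Bbbk = (k_1, \dots, k_m)$ be a tuple of positive integers with Hoffman dual $\Bbbk^\vee = (k_1', \dots, k_{m'}')$, and let N be a positive integer. Then the following polynomial identity holds in $\mathbb{Q}[t]$: $\sum_{N \geq n_1 \geq \cdots \geq n_m \geq 1} (-1)^{n_1} \binom{N}{n_1} \frac{t^{n_m}}{n_1^{k_1} \cdots n_m^{k_m}} = \sum_{N \geq n_1 \geq \cdots \geq n_{m'} \geq 1} \frac{(1-t)^{n_{m'}} - 1}{n_1^{k_1'} \cdots n_{m'}^{k_{m'}'}}$. -/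
open Polynomial

/-- The finite set of weakly decreasing tuples `N ≥ n_1 ≥ n_2 ≥ ⋯ ≥ n_m ≥ 1`, encoded as
functions `Fin m → ℕ` (so `n i` is `n_{i+1}`, and antitonicity is `i ≤ j → n j ≤ n i`). -/
def decTuples (m N : ℕ) : Finset (Fin m → ℕ) :=
  (Fintype.piFinset fun _ => Finset.Icc 1 N).filter fun n => ∀ i j : Fin m, i ≤ j → n j ≤ n i

/-- The set of partial sums `{k_1, k_1 + k_2, …, k_1 + ⋯ + k_{m-1}}` of an index
`𝕜 = (k_1, …, k_m)` (the "comma positions" of the corresponding word of weight `wt 𝕜`);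
the total sum is removed. -/
def commaSet {m : ℕ} (k : Fin m → ℕ) : Finset ℕ :=
  (Finset.image (fun i : Fin m => ∑ j ∈ Finset.Iic i, k j) Finset.univ).erase (∑ j, k j)


open Finset


open Finset

lemma cast_choose_div {n j : ℕ} (hn : 1 ≤ n) (hj : n ≤ j) :
    (j.choose n : ℚ) / j = ((j-1).choose (n-1)) / n := by
  have hj1 : 1 ≤ j := le_trans hn hj
  have h := Nat.add_one_mul_choose_eq (j-1) (n-1)
  rw [show j - 1 + 1 = j from by omega, show n - 1 + 1 = n from by omega] at h
  have hq : (j : ℚ) * ((j-1).choose (n-1)) = (j.choose n) * n := by exact_mod_cast congrArg (Nat.cast : ℕ → ℚ) h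
  have hj0 : (j:ℚ) ≠ 0 := by positivity
  have hn0 : (n:ℚ) ≠ 0 := by positivity
  rw [div_eq_div_iff hj0 hn0]
  linarith

lemma h1 (n : ℕ) (hn : 1 ≤ n) (M : ℕ) :
    ∑ j ∈ Icc n M, (j.choose n : ℚ) / j = (M.choose n) / n := by
  induction M with
  | zero =>
    rw [Nat.choose_eq_zero_of_lt hn]
    rw [show Icc n 0 = ∅ by simp [Finset.Icc_eq_empty_iff]; omega]
    simp
  | succ M ih =>
    by_cases h : n ≤ M + 1
    · rw [Finset.sum_Icc_succ_top h, ih]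
      have pasc := Nat.choose_succ_succ M (n-1)
      simp only [Nat.succ_eq_add_one] at pasc
      rw [show n - 1 + 1 = n from by omega] at pasc
      have key := Nat.add_one_mul_choose_eq M (n-1)
      rw [show n - 1 + 1 = n from by omega] at key
      have keyq : ((M:ℚ)+1) * (M.choose (n-1) : ℚ) = ((M+1).choose n : ℚ) * n := by
        exact_mod_cast key
      have pascq : ((M+1).choose n : ℚ) = (M.choose (n-1) : ℚ) + M.choose n := by exact_mod_cast pasc
      have hn0 : (n:ℚ) ≠ 0 := by positivity
      have hM0 : ((M:ℚ)+1) ≠ 0 := by positivity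
      have e1 : (((M+1).choose n : ℚ))/((M:ℚ)+1) = (M.choose (n-1):ℚ)/n := by
        rw [div_eq_div_iff hM0 hn0]; linarith
      push_cast
      push_cast at e1 pascq
      rw [e1, pascq]
      ring
    · rw [show Icc n (M+1) = ∅ by simp [Finset.Icc_eq_empty_iff]; omega,
        Nat.choose_eq_zero_of_lt (by omega)]
      simp

lemma h2aux (L : ℕ) (hL : 1 ≤ L) : ∀ n : ℕ, ∑ j ∈ range (n+1), ((-1:ℚ))^j * (L.choose j) = (-1)^n * ((L-1).choose n) := by
  intro n
  induction n with
  | zero => simp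
  | succ n ih =>
    rw [Finset.sum_range_succ, ih]
    have pasc := Nat.choose_succ_succ (L-1) n
    simp only [Nat.succ_eq_add_one] at pasc
    rw [show L - 1 + 1 = L from by omega] at pasc
    rw [pasc]
    push_cast
    ring

lemma h2 (L n : ℕ) (hn : 1 ≤ n) (hnL : n ≤ L) :
    ∑ j ∈ Icc n L, ((-1:ℚ))^j * (L.choose j) = (-1)^n * ((L-1).choose (n-1)) := by
  have hL : 1 ≤ L := le_trans hn hnL
  have full : ∑ j ∈ range (L+1), ((-1:ℚ))^j * (L.choose j) = 0 := by
    rw [h2aux L hL L, Nat.choose_eq_zero_of_lt (by omega)]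
    simp
  have split : range (L+1) = range n ∪ Icc n L := by
    ext x; simp [Finset.mem_range, Finset.mem_Icc]; omega
  have hdisj : Disjoint (range n) (Icc n L) := by
    simp [Finset.disjoint_left, Finset.mem_range, Finset.mem_Icc]; omega
  rw [split, Finset.sum_union hdisj] at full
  have hrn : ∑ j ∈ range n, ((-1:ℚ))^j * (L.choose j) = (-1)^(n-1) * ((L-1).choose (n-1)) := by
    have := h2aux L hL (n-1)
    rwa [show n - 1 + 1 = n from by omega] at this
  rw [hrn] at full
  have hpow := pow_succ (-1:ℚ) (n-1)
  rw [show n - 1 + 1 = n from by omega] at hpow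
  rw [hpow]
  linarith

open Finset

/-- prefix sums of all nonempty prefixes (including the full list) -/
def fS (l : List ℕ) : Finset ℕ :=
  (Finset.range l.length).image fun i => (l.take (i+1)).sum

@[simp] lemma fS_nil : fS [] = ∅ := by simp [fS]

lemma fS_concat (l : List ℕ) (c : ℕ) : fS (l ++ [c]) = insert (l.sum + c) (fS l) := by
  unfold fS
  rw [List.length_append, List.length_singleton, Finset.range_add_one, Finset.image_insert]
  congr 1
  · rw [List.take_of_length_le (by simp)]
    simp
  · apply Finset.image_congr
    intro i hi
    simp only [Finset.mem_coe, Finset.mem_range] at hi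
    show (List.take (i+1) (l ++ [c])).sum = (List.take (i+1) l).sum
    rw [List.take_append_of_le_length (Nat.succ_le_of_lt hi)]

lemma fS_bound {l : List ℕ} {x : ℕ} (hx : x ∈ fS l) : x ≤ l.sum := by
  simp only [fS, Finset.mem_image, Finset.mem_range] at hx
  obtain ⟨i, hi, rfl⟩ := hx
  conv_rhs => rw [← List.take_append_drop (i+1) l]
  rw [List.sum_append]
  omega

lemma fS_pos {l : List ℕ} (hl : ∀ x ∈ l, 0 < x) {x : ℕ} (hx : x ∈ fS l) : 0 < x := by
  simp only [fS, Finset.mem_image, Finset.mem_range] at hx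
  obtain ⟨i, hi, rfl⟩ := hx
  have hne : l.take (i+1) ≠ [] := by
    intro h
    have h2 : (l.take (i+1)).length = 0 := by rw [h]; rfl
    rw [List.length_take] at h2
    omega
  obtain ⟨a, t, hat⟩ := List.exists_cons_of_ne_nil hne
  have ha : a ∈ l := by
    have : a ∈ l.take (i+1) := by rw [hat]; exact List.mem_cons_self
    exact List.mem_of_mem_take this
  rw [hat]
  simp only [List.sum_cons]
  have := hl a ha
  omega

lemma fS_full {l : List ℕ} (hl : l ≠ []) : l.sum ∈ fS l := by
  rcases (List.eq_nil_or_concat l).resolve_left hl with ⟨l', c, rfl⟩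
  rw [List.concat_eq_append, fS_concat]
  simp

lemma sum_eq_zero_iff_nil {l : List ℕ} (hl : ∀ x ∈ l, 0 < x) (h : l.sum = 0) : l = [] := by
  cases l with
  | nil => rfl
  | cons a t =>
    exfalso
    have := hl a List.mem_cons_self
    simp [List.sum_cons] at h
    omega



def Wf (N : ℕ) : List ℕ → ℕ → ℚ
  | [], _ => 1
  | k :: ks, n => ∑ j ∈ Finset.Icc n N, ((j:ℚ)^k)⁻¹ * Wf N ks j

def Vf (N : ℕ) : List ℕ → ℕ → ℚ
  | [], n => (-1)^n * (N.choose n : ℚ)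
  | k :: ks, n => ∑ j ∈ Finset.Icc n N, ((j:ℚ)^k)⁻¹ * Vf N ks j

lemma swapIcc (N n : ℕ) {M : Type*} [AddCommMonoid M] (f : ℕ → ℕ → M) :
    ∑ j ∈ Icc n N, ∑ t ∈ Icc j N, f j t = ∑ t ∈ Icc n N, ∑ j ∈ Icc n t, f j t := by
  apply Finset.sum_comm'
  intro x y
  simp only [mem_Icc]
  omega


lemma key_lemma (N : ℕ) : ∀ (w : ℕ) (l r : List ℕ) (c e : ℕ), 0 < c → 0 < e →
    (∀ x ∈ l, 0 < x) → (∀ x ∈ r, 0 < x) → l.sum + c = w → r.sum + e = w →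
    (∀ x, x ∈ fS r ↔ 0 < x ∧ x < w ∧ x ∉ fS l) →
    ∀ n, 1 ≤ n → n ≤ N →
    ((n:ℚ)^c)⁻¹ * Vf N l.reverse n =
      (-1)^n * ∑ j ∈ Icc n N, (j.choose n : ℚ) * (((j:ℚ)^e)⁻¹ * Wf N r.reverse j) := by
  intro w
  induction w using Nat.strong_induction_on with
  | _ w ih =>
  intro l r c e hc he hl hr hlw hrw hdual n hn hnN
  have hn0 : (n:ℚ) ≠ 0 := by positivity
  rcases Nat.lt_or_ge w 2 with hw | hw
  · -- base case: w = 1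
    have hc1 : c = 1 := by omega
    have hl0 : l = [] := sum_eq_zero_iff_nil hl (by omega)
    have he1 : e = 1 := by omega
    have hr0 : r = [] := sum_eq_zero_iff_nil hr (by omega)
    subst hl0 hr0 hc1 he1
    simp only [List.reverse_nil]
    show ((n:ℚ)^1)⁻¹ * ((-1)^n * (N.choose n : ℚ)) = _
    have hstep : ∑ j ∈ Icc n N, (j.choose n : ℚ) * (((j:ℚ)^1)⁻¹ * Wf N [] j)
        = ∑ j ∈ Icc n N, (j.choose n : ℚ) / j := by
      apply Finset.sum_congr rfl
      intro j hj
      show (j.choose n : ℚ) * (((j:ℚ)^1)⁻¹ * 1) = _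
      rw [pow_one]
      ring
    rw [hstep, h1 n hn N, pow_one]
    ring
  · -- inductive case: w ≥ 2
    by_cases hA : (w-1) ∈ fS l
    · -- Case B : last of l is 1, last of r ≥ 2
      have hc1 : c = 1 := by
        have := fS_bound hA
        omega
      have hlne : l ≠ [] := by
        intro h; rw [h] at hA; simp at hA
      have hrw1 : w - 1 ∉ fS r := by
        intro h
        exact ((hdual (w-1)).mp h).2.2 hA
      have he2 : 2 ≤ e := by
        by_contra h
        have hrne : r ≠ [] := by
          intro h'
          rw [h'] at hrw
          simp at hrw
          omega
        have : r.sum ∈ fS r := fS_full hrne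
        rw [show r.sum = w - 1 from by omega] at this
        exact hrw1 this
      obtain ⟨d, rfl⟩ : ∃ d, e = d + 2 := ⟨e - 2, by omega⟩
      rcases (List.eq_nil_or_concat l).resolve_left hlne with ⟨l', c', rfl⟩
      rw [List.concat_eq_append] at *
      have hc'pos : 0 < c' := hl c' (by simp)
      have hl'sum : l'.sum + c' = w - 1 := by
        rw [List.sum_append] at hlw; simp at hlw; omega
      have hfSl : fS (l' ++ [c']) = insert (w-1) (fS l') := by
        rw [fS_concat, hl'sum]
      have hdual' : ∀ x, x ∈ fS r ↔ 0 < x ∧ x < w - 1 ∧ x ∉ fS l' := by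
        intro x
        constructor
        · intro hx
          obtain ⟨h1x, h2x, h3x⟩ := (hdual x).mp hx
          rw [hfSl] at h3x
          simp only [Finset.mem_insert, not_or] at h3x
          exact ⟨h1x, by omega, h3x.2⟩
        · intro ⟨h1x, h2x, h3x⟩
          apply (hdual x).mpr
          refine ⟨h1x, by omega, ?_⟩
          rw [hfSl]
          simp only [Finset.mem_insert, not_or]
          exact ⟨by omega, h3x⟩
      have IH := ih (w-1) (by omega) l' r c' (d+1) hc'pos (by omega)
        (fun x hx => hl x (by simp [hx])) hr (by omega) (by omega) hdual'
      have hrev : (l' ++ [c']).reverse = c' :: l'.reverse := by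
        rw [List.reverse_append]; rfl
      rw [hc1, hrev, pow_one]
      show (n:ℚ)⁻¹ * Vf N (c' :: l'.reverse) n = _
      rw [show Vf N (c' :: l'.reverse) n = ∑ t ∈ Icc n N, ((t:ℚ)^c')⁻¹ * Vf N l'.reverse t from rfl]
      have step1 : ∑ t ∈ Icc n N, ((t:ℚ)^c')⁻¹ * Vf N l'.reverse t
          = ∑ t ∈ Icc n N, ∑ j ∈ Icc t N, (-1)^t * ((j.choose t : ℚ) * (((j:ℚ)^(d+1))⁻¹ * Wf N r.reverse j)) := by
        apply Finset.sum_congr rfl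
        intro t ht
        simp only [mem_Icc] at ht
        rw [IH t (by omega) ht.2, Finset.mul_sum]
      rw [step1, swapIcc]
      have step2 : ∀ j ∈ Icc n N,
          ∑ t ∈ Icc n j, (-1)^t * ((j.choose t : ℚ) * (((j:ℚ)^(d+1))⁻¹ * Wf N r.reverse j))
          = ((-1)^n * ((j-1).choose (n-1) : ℚ)) * (((j:ℚ)^(d+1))⁻¹ * Wf N r.reverse j) := by
        intro j hj
        simp only [mem_Icc] at hj
        calc ∑ t ∈ Icc n j, (-1)^t * ((j.choose t : ℚ) * (((j:ℚ)^(d+1))⁻¹ * Wf N r.reverse j))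
            = (∑ t ∈ Icc n j, (-1:ℚ)^t * (j.choose t : ℚ)) * (((j:ℚ)^(d+1))⁻¹ * Wf N r.reverse j) := by
              rw [Finset.sum_mul]
              exact Finset.sum_congr rfl fun t _ => by ring
          _ = _ := by rw [h2 j n hn hj.1]
      rw [Finset.sum_congr rfl step2, Finset.mul_sum, Finset.mul_sum]
      apply Finset.sum_congr rfl
      intro j hj
      simp only [mem_Icc] at hj
      have hj0 : (j:ℚ) ≠ 0 := by
        have : 1 ≤ j := le_trans hn hj.1
        positivity
      have h' : ((j-1).choose (n-1) : ℚ) * (n:ℚ)⁻¹ = (j.choose n : ℚ) * (j:ℚ)⁻¹ := by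
        have := cast_choose_div hn hj.1
        rw [div_eq_mul_inv, div_eq_mul_inv] at this
        linarith
      rw [show ((j:ℚ)^(d+2))⁻¹ = ((j:ℚ)^(d+1))⁻¹ * (j:ℚ)⁻¹ from by rw [pow_succ, mul_inv]]
      linear_combination ((-1:ℚ)^n * ((j:ℚ)^(d+1))⁻¹ * Wf N r.reverse j) * h'
    · -- Case A : last of l ≥ 2, last of r is 1
      have hwr : w - 1 ∈ fS r := (hdual (w-1)).mpr ⟨by omega, by omega, hA⟩
      have he1 : e = 1 := by
        have := fS_bound hwr
        omega
      have hrne : r ≠ [] := by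
        intro h; rw [h] at hwr; simp at hwr
      have hc2 : 2 ≤ c := by
        by_contra h
        have hlne : l ≠ [] := by
          intro h'
          rw [h'] at hlw
          simp at hlw
          omega
        apply hA
        rw [show w - 1 = l.sum from by omega]
        exact fS_full hlne
      obtain ⟨d, rfl⟩ : ∃ d, c = d + 2 := ⟨c - 2, by omega⟩
      rcases (List.eq_nil_or_concat r).resolve_left hrne with ⟨r', e', rfl⟩
      rw [List.concat_eq_append] at *
      have he'pos : 0 < e' := hr e' (by simp)
      have hr'sum : r'.sum + e' = w - 1 := by
        rw [List.sum_append] at hrw; simp at hrw; omega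
      have hfSr : fS (r' ++ [e']) = insert (w-1) (fS r') := by
        rw [fS_concat, hr'sum]
      have hdual' : ∀ x, x ∈ fS r' ↔ 0 < x ∧ x < w - 1 ∧ x ∉ fS l := by
        intro x
        constructor
        · intro hx
          have hxr : x ∈ fS (r' ++ [e']) := by rw [hfSr]; exact Finset.mem_insert_of_mem hx
          obtain ⟨h1x, h2x, h3x⟩ := (hdual x).mp hxr
          have := fS_bound hx
          exact ⟨h1x, by omega, h3x⟩
        · intro ⟨h1x, h2x, h3x⟩
          have hxr : x ∈ fS (r' ++ [e']) := (hdual x).mpr ⟨h1x, by omega, h3x⟩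
          rw [hfSr] at hxr
          rcases Finset.mem_insert.mp hxr with h | h
          · omega
          · exact h
      have IH := ih (w-1) (by omega) l r' (d+1) e' (by omega) he'pos
        hl (fun x hx => hr x (by simp [hx])) (by omega) (by omega) hdual'
      have hrev : (r' ++ [e']).reverse = e' :: r'.reverse := by
        rw [List.reverse_append]; rfl
      rw [he1, hrev]
      have bdef : ∀ j : ℕ, Wf N (e' :: r'.reverse) j
          = ∑ t ∈ Icc j N, ((t:ℚ)^e')⁻¹ * Wf N r'.reverse t := fun j => rfl
      calc ((n:ℚ)^(d+2))⁻¹ * Vf N l.reverse n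
          = (n:ℚ)⁻¹ * (((n:ℚ)^(d+1))⁻¹ * Vf N l.reverse n) := by
            rw [pow_succ, mul_inv]
            ring
        _ = (n:ℚ)⁻¹ * ((-1)^n * ∑ t ∈ Icc n N, (t.choose n : ℚ) * (((t:ℚ)^e')⁻¹ * Wf N r'.reverse t)) := by
            rw [IH n hn hnN]
        _ = ∑ t ∈ Icc n N, ((-1)^n * ((t.choose n : ℚ) / n)) * (((t:ℚ)^e')⁻¹ * Wf N r'.reverse t) := by
            rw [Finset.mul_sum, Finset.mul_sum]
            exact Finset.sum_congr rfl fun t _ => by ring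
        _ = ∑ t ∈ Icc n N, (∑ j ∈ Icc n t, (-1:ℚ)^n * ((j.choose n : ℚ) / j)) * (((t:ℚ)^e')⁻¹ * Wf N r'.reverse t) := by
            apply Finset.sum_congr rfl
            intro t ht
            rw [← Finset.mul_sum, h1 n hn t]
        _ = ∑ t ∈ Icc n N, ∑ j ∈ Icc n t, ((-1:ℚ)^n * ((j.choose n : ℚ) / j)) * (((t:ℚ)^e')⁻¹ * Wf N r'.reverse t) := by
            exact Finset.sum_congr rfl fun t _ => by rw [Finset.sum_mul]
        _ = ∑ j ∈ Icc n N, ∑ t ∈ Icc j N, ((-1:ℚ)^n * ((j.choose n : ℚ) / j)) * (((t:ℚ)^e')⁻¹ * Wf N r'.reverse t) := by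
            rw [swapIcc]
        _ = (-1)^n * ∑ j ∈ Icc n N, (j.choose n : ℚ) * (((j:ℚ)^1)⁻¹ * Wf N (e' :: r'.reverse) j) := by
            rw [Finset.mul_sum]
            apply Finset.sum_congr rfl
            intro j hj
            rw [← Finset.mul_sum, ← bdef j, pow_one]
            ring


def decTG (N m a : ℕ) : Finset (Fin m → ℕ) :=
  (Fintype.piFinset fun _ => Finset.Icc a N).filter fun n => ∀ i j : Fin m, i ≤ j → n j ≤ n i

lemma mem_decTG {N m a : ℕ} {n : Fin m → ℕ} :
    n ∈ decTG N m a ↔ (∀ i, a ≤ n i ∧ n i ≤ N) ∧ ∀ i j : Fin m, i ≤ j → n j ≤ n i := by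
  simp [decTG, Fintype.mem_piFinset, Finset.mem_filter, Finset.mem_Icc]

lemma peel (N : ℕ) {M : Type*} [AddCommMonoid M] (r a : ℕ) (F : (Fin (r+1) → ℕ) → M) :
    ∑ n ∈ decTG N (r+1) a, F n = ∑ j ∈ Icc a N, ∑ p ∈ decTG N r j, F (Fin.snoc p j) := by
  rw [Finset.sum_sigma']
  apply Finset.sum_nbij' (i := fun n => (⟨n (Fin.last r), Fin.init n⟩ : (_ : ℕ) × (Fin r → ℕ)))
    (j := fun x => Fin.snoc x.2 x.1)
  · intro n hn
    rw [mem_decTG] at hn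
    rw [Finset.mem_sigma]
    constructor
    · rw [Finset.mem_Icc]
      exact (hn.1 (Fin.last r))
    · rw [mem_decTG]
      constructor
      · intro i
        refine ⟨hn.2 _ _ (Fin.le_last _), (hn.1 _).2⟩
      · intro i j hij
        exact hn.2 _ _ (by rwa [Fin.castSucc_le_castSucc_iff])
  · intro x hx
    rw [Finset.mem_sigma, Finset.mem_Icc, mem_decTG] at hx
    rw [mem_decTG]
    constructor
    · intro i
      induction i using Fin.lastCases with
      | last => simp only [Fin.snoc_last]; exact ⟨hx.1.1, hx.1.2⟩
      | cast i =>
        simp only [Fin.snoc_castSucc]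
        exact ⟨le_trans hx.1.1 (hx.2.1 i).1, (hx.2.1 i).2⟩
    · intro i j hij
      induction j using Fin.lastCases with
      | last =>
        simp only [Fin.snoc_last]
        induction i using Fin.lastCases with
        | last => simp
        | cast i => simp only [Fin.snoc_castSucc]; exact (hx.2.1 i).1
      | cast j =>
        induction i using Fin.lastCases with
        | last =>
          exfalso
          exact absurd (lt_of_le_of_lt hij (Fin.castSucc_lt_last j)) (lt_irrefl _)
        | cast i =>
          simp only [Fin.snoc_castSucc]
          exact hx.2.2 i j (by rwa [Fin.castSucc_le_castSucc_iff] at hij)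
  · intro n _
    exact Fin.snoc_init_self n
  · intro x _
    simp [Fin.snoc_last, Fin.init_snoc]
  · intro n _
    rw [Fin.snoc_init_self]

lemma sum_decTG_one (N a : ℕ) (f : ℕ → ℚ) :
    ∑ n ∈ decTG N 1 a, f (n 0) = ∑ j ∈ Icc a N, f j := by
  apply Finset.sum_nbij' (i := fun n => n 0) (j := fun j => fun _ => j)
  · intro n hn
    rw [mem_decTG] at hn
    rw [Finset.mem_Icc]
    exact hn.1 0
  · intro j hj
    rw [Finset.mem_Icc] at hj
    rw [mem_decTG]
    exact ⟨fun _ => hj, fun _ _ _ => le_refl _⟩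
  · intro n _
    funext i
    rw [Subsingleton.elim i 0]
  · intro j _
    rfl
  · intro n _
    rfl

lemma bridgeL (N : ℕ) : ∀ (r : ℕ) (a : ℕ) (k : Fin (r+1) → ℕ),
    ∑ n ∈ decTG N (r+1) a, ((-1:ℚ)^(n 0) * (N.choose (n 0) : ℚ) / ∏ i, (n i : ℚ)^(k i))
      = Vf N (List.ofFn k).reverse a := by
  intro r
  induction r with
  | zero =>
    intro a k
    rw [show (List.ofFn k).reverse = [k 0] from by simp]
    rw [show Vf N [k 0] a = ∑ j ∈ Icc a N, ((j:ℚ)^(k 0))⁻¹ * Vf N [] j from rfl]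
    rw [← sum_decTG_one N a (fun j => ((j:ℚ)^(k 0))⁻¹ * Vf N [] j)]
    apply Finset.sum_congr rfl
    intro n _
    rw [Fin.prod_univ_one]
    show _ = ((n 0 : ℚ)^(k 0))⁻¹ * ((-1)^(n 0) * (N.choose (n 0) : ℚ))
    rw [div_eq_mul_inv]
    ring
  | succ r ihr =>
    intro a k
    rw [peel]
    have hrev : (List.ofFn k).reverse
        = k (Fin.last (r+1)) :: (List.ofFn (fun i : Fin (r+1) => k i.castSucc)).reverse := by
      rw [List.ofFn_succ', List.concat_eq_append, List.reverse_append]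
      rfl
    rw [hrev]
    rw [show Vf N (k (Fin.last (r+1)) :: (List.ofFn (fun i : Fin (r+1) => k i.castSucc)).reverse) a
        = ∑ j ∈ Icc a N, ((j:ℚ)^(k (Fin.last (r+1))))⁻¹
            * Vf N (List.ofFn (fun i : Fin (r+1) => k i.castSucc)).reverse j from rfl]
    apply Finset.sum_congr rfl
    intro j hj
    rw [← ihr j (fun i => k i.castSucc), Finset.mul_sum]
    apply Finset.sum_congr rfl
    intro p hp
    have h0 : (Fin.snoc p j : Fin (r+2) → ℕ) 0 = p 0 := by
      rw [show (0 : Fin (r+2)) = Fin.castSucc 0 from rfl, Fin.snoc_castSucc]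
    rw [Fin.prod_univ_castSucc, h0]
    simp only [Fin.snoc_castSucc, Fin.snoc_last]
    rw [div_eq_mul_inv, div_eq_mul_inv, mul_inv]
    ring

lemma bridgeR (N : ℕ) : ∀ (r : ℕ) (a : ℕ) (k : Fin (r+1) → ℕ),
    ∑ n ∈ decTG N (r+1) a, ((1:ℚ) / ∏ i, (n i : ℚ)^(k i))
      = Wf N (List.ofFn k).reverse a := by
  intro r
  induction r with
  | zero =>
    intro a k
    rw [show (List.ofFn k).reverse = [k 0] from by simp]
    rw [show Wf N [k 0] a = ∑ j ∈ Icc a N, ((j:ℚ)^(k 0))⁻¹ * Wf N [] j from rfl]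
    rw [← sum_decTG_one N a (fun j => ((j:ℚ)^(k 0))⁻¹ * Wf N [] j)]
    apply Finset.sum_congr rfl
    intro n _
    rw [Fin.prod_univ_one]
    show _ = ((n 0 : ℚ)^(k 0))⁻¹ * 1
    rw [div_eq_mul_inv]
    ring
  | succ r ihr =>
    intro a k
    rw [peel]
    have hrev : (List.ofFn k).reverse
        = k (Fin.last (r+1)) :: (List.ofFn (fun i : Fin (r+1) => k i.castSucc)).reverse := by
      rw [List.ofFn_succ', List.concat_eq_append, List.reverse_append]
      rfl
    rw [hrev]
    rw [show Wf N (k (Fin.last (r+1)) :: (List.ofFn (fun i : Fin (r+1) => k i.castSucc)).reverse) a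
        = ∑ j ∈ Icc a N, ((j:ℚ)^(k (Fin.last (r+1))))⁻¹
            * Wf N (List.ofFn (fun i : Fin (r+1) => k i.castSucc)).reverse j from rfl]
    apply Finset.sum_congr rfl
    intro j hj
    rw [← ihr j (fun i => k i.castSucc), Finset.mul_sum]
    apply Finset.sum_congr rfl
    intro p hp
    rw [Fin.prod_univ_castSucc]
    simp only [Fin.snoc_castSucc, Fin.snoc_last]
    rw [div_eq_mul_inv, div_eq_mul_inv, mul_inv]
    ring


lemma iic_take {mm : ℕ} (k : Fin (mm+1) → ℕ) (i : Fin (mm+1)) :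
    ((List.ofFn k).take (i.val+1)).sum = ∑ j ∈ Finset.Iic i, k j := by
  induction i using Fin.induction with
  | zero =>
    have h1 : Finset.Iic (0 : Fin (mm+1)) = {0} := by
      ext x; simp [Fin.le_zero_iff]
    rw [h1, Finset.sum_singleton]
    have h2 := List.sum_take_succ (List.ofFn k) 0 (by simp)
    simp only [List.take_zero, List.sum_nil, zero_add] at h2
    show (List.take 1 (List.ofFn k)).sum = k 0
    rw [h2, List.getElem_ofFn]
    rfl
  | succ i ihi =>
    have hlt : i.val + 1 < (List.ofFn k).length := by rw [List.length_ofFn]; omega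
    have h2 := List.sum_take_succ (List.ofFn k) (i.val+1) hlt
    have hIic : Finset.Iic i.succ = insert i.succ (Finset.Iic i.castSucc) := by
      ext x
      simp only [Finset.mem_Iic, Finset.mem_insert, Fin.le_def, Fin.ext_iff, Fin.val_succ,
        Fin.coe_castSucc]
      omega
    have hnotmem : i.succ ∉ Finset.Iic i.castSucc := by
      simp [Finset.mem_Iic, Fin.le_def]
    rw [show i.succ.val + 1 = i.val + 1 + 1 from rfl, h2, hIic, Finset.sum_insert hnotmem]
    rw [show i.castSucc.val + 1 = i.val + 1 from rfl] at ihi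
    rw [ihi, List.getElem_ofFn]
    exact add_comm _ _

lemma commaSet_eq {mm : ℕ} (k : Fin (mm+1) → ℕ) (hk : ∀ i, 0 < k i) :
    commaSet k = fS (List.ofFn fun i : Fin mm => k i.castSucc) := by
  have himg : Finset.image (fun i : Fin (mm+1) => ∑ j ∈ Finset.Iic i, k j) Finset.univ
      = fS (List.ofFn k) := by
    unfold fS
    rw [List.length_ofFn]
    ext x
    simp only [Finset.mem_image, Finset.mem_range, Finset.mem_univ, true_and]
    constructor
    · rintro ⟨i, rfl⟩
      exact ⟨i.val, i.isLt, iic_take k i⟩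
    · rintro ⟨i, hi, rfl⟩
      exact ⟨⟨i, hi⟩, (iic_take k ⟨i, hi⟩).symm⟩
  unfold commaSet
  rw [himg]
  have hsplit : List.ofFn k
      = (List.ofFn fun i : Fin mm => k i.castSucc) ++ [k (Fin.last mm)] := by
    rw [List.ofFn_succ', List.concat_eq_append]
  have hsum : (List.ofFn fun i : Fin mm => k i.castSucc).sum + k (Fin.last mm) = ∑ j, k j := by
    rw [List.sum_ofFn, ← Fin.sum_univ_castSucc]
  rw [hsplit, fS_concat, hsum]
  apply Finset.erase_insert
  intro hmem
  have h1 := fS_bound hmem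
  rw [List.sum_ofFn] at h1
  have h2 : ∑ j, k j = ∑ i : Fin mm, k i.castSucc + k (Fin.last mm) := Fin.sum_univ_castSucc k
  have := hk (Fin.last mm)
  omega

open Polynomial in
lemma assembleL (N mm : ℕ) (k : Fin (mm+1) → ℕ) (φ : ℕ → ℚ[X]) :
    ∑ n ∈ decTG N (mm+1) 1,
        C ((-1:ℚ)^(n 0) * (N.choose (n 0) : ℚ) / ∏ i, (n i : ℚ)^(k i)) * φ (n (Fin.last mm))
      = ∑ j ∈ Icc 1 N,
          C (((j:ℚ)^(k (Fin.last mm)))⁻¹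
            * Vf N (List.ofFn fun i : Fin mm => k i.castSucc).reverse j) * φ j := by
  rw [peel]
  apply Finset.sum_congr rfl
  intro j hj
  cases mm with
  | zero =>
    have huniv : decTG N 0 j = {(fun i => i.elim0 : Fin 0 → ℕ)} :=
      Finset.eq_singleton_iff_unique_mem.mpr
        ⟨by simp [mem_decTG], fun p _ => funext fun i => i.elim0⟩
    rw [huniv, Finset.sum_singleton]
    have e0 : (Fin.snoc (fun i => i.elim0 : Fin 0 → ℕ) j : Fin (0+1) → ℕ) 0 = j := rfl
    have el : (Fin.snoc (fun i => i.elim0 : Fin 0 → ℕ) j : Fin (0+1) → ℕ) (Fin.last 0) = j := rfl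
    rw [e0, el]
    rw [show (List.ofFn fun i : Fin 0 => k i.castSucc) = [] from rfl, List.reverse_nil]
    congr 1
    congr 1
    rw [Fin.prod_univ_succ]
    simp only [e0, Finset.univ_eq_empty, Finset.prod_empty]
    show (-1:ℚ)^j * (N.choose j:ℚ) / ((j:ℚ)^(k (Fin.last 0)) * 1)
        = ((j:ℚ)^(k (Fin.last 0)))⁻¹ * ((-1)^j * (N.choose j:ℚ))
    rw [div_eq_mul_inv]
    ring
  | succ r =>
    simp only [Fin.snoc_last]
    rw [← Finset.sum_mul, ← map_sum]
    congr 2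
    rw [← bridgeL N r j (fun i => k i.castSucc), Finset.mul_sum]
    apply Finset.sum_congr rfl
    intro p hp
    have h0 : (Fin.snoc p j : Fin (r+2) → ℕ) 0 = p 0 := by
      rw [show (0 : Fin (r+2)) = Fin.castSucc 0 from rfl, Fin.snoc_castSucc]
    rw [Fin.prod_univ_castSucc, h0]
    simp only [Fin.snoc_castSucc, Fin.snoc_last]
    rw [div_eq_mul_inv, div_eq_mul_inv, mul_inv]
    ring

open Polynomial in
lemma assembleR (N mm : ℕ) (k : Fin (mm+1) → ℕ) (φ : ℕ → ℚ[X]) :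
    ∑ n ∈ decTG N (mm+1) 1,
        C ((1:ℚ) / ∏ i, (n i : ℚ)^(k i)) * φ (n (Fin.last mm))
      = ∑ j ∈ Icc 1 N,
          C (((j:ℚ)^(k (Fin.last mm)))⁻¹
            * Wf N (List.ofFn fun i : Fin mm => k i.castSucc).reverse j) * φ j := by
  rw [peel]
  apply Finset.sum_congr rfl
  intro j hj
  cases mm with
  | zero =>
    have huniv : decTG N 0 j = {(fun i => i.elim0 : Fin 0 → ℕ)} :=
      Finset.eq_singleton_iff_unique_mem.mpr
        ⟨by simp [mem_decTG], fun p _ => funext fun i => i.elim0⟩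
    rw [huniv, Finset.sum_singleton]
    have e0 : (Fin.snoc (fun i => i.elim0 : Fin 0 → ℕ) j : Fin (0+1) → ℕ) 0 = j := rfl
    have el : (Fin.snoc (fun i => i.elim0 : Fin 0 → ℕ) j : Fin (0+1) → ℕ) (Fin.last 0) = j := rfl
    rw [el]
    rw [show (List.ofFn fun i : Fin 0 => k i.castSucc) = [] from rfl, List.reverse_nil]
    congr 1
    congr 1
    rw [Fin.prod_univ_succ]
    simp only [e0, Finset.univ_eq_empty, Finset.prod_empty]
    show (1:ℚ) / ((j:ℚ)^(k (Fin.last 0)) * 1)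
        = ((j:ℚ)^(k (Fin.last 0)))⁻¹ * 1
    rw [div_eq_mul_inv]
    ring
  | succ r =>
    simp only [Fin.snoc_last]
    rw [← Finset.sum_mul, ← map_sum]
    congr 2
    rw [← bridgeR N r j (fun i => k i.castSucc), Finset.mul_sum]
    apply Finset.sum_congr rfl
    intro p hp
    rw [Fin.prod_univ_castSucc]
    simp only [Fin.snoc_castSucc, Fin.snoc_last]
    rw [div_eq_mul_inv, div_eq_mul_inv, mul_inv]
    ring


open Polynomial in
lemma expand_pow (j : ℕ) : ((1:ℚ[X]) - X)^j - 1
    = ∑ n ∈ Icc 1 j, C ((-1:ℚ)^n * (j.choose n : ℚ)) * X^n := by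
  have h1 : ((1:ℚ[X]) - X)^j = ∑ n ∈ range (j+1), C ((-1:ℚ)^n * (j.choose n : ℚ)) * X^n := by
    rw [show (1:ℚ[X]) - X = -X + 1 by ring, add_pow]
    apply Finset.sum_congr rfl
    intro n _
    rw [one_pow, mul_one, neg_pow, map_mul, map_pow, map_neg, map_one, Polynomial.C_eq_natCast]
    ring
  have hsplit : range (j+1) = insert 0 (Icc 1 j) := by
    ext x; simp [Finset.mem_range, Finset.mem_Icc]; omega
  rw [h1, hsplit, Finset.sum_insert (by simp)]
  norm_num

open Polynomial in
lemma final_sum (N : ℕ) (a b : ℕ → ℚ)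
    (hab : ∀ n, 1 ≤ n → n ≤ N → a n = (-1)^n * ∑ j ∈ Icc n N, (j.choose n : ℚ) * b j) :
    ∑ n ∈ Icc 1 N, C (a n) * X^n = ∑ j ∈ Icc 1 N, C (b j) * ((1-X)^j - 1) := by
  have step1 : ∀ n ∈ Icc 1 N, C (a n) * X^n
      = ∑ j ∈ Icc n N, C ((-1:ℚ)^n * (j.choose n : ℚ) * b j) * X^n := by
    intro n hn
    simp only [mem_Icc] at hn
    rw [hab n hn.1 hn.2, Finset.mul_sum, map_sum, Finset.sum_mul]
    apply Finset.sum_congr rfl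
    intro j _
    rw [← mul_assoc]
  rw [Finset.sum_congr rfl step1, swapIcc]
  apply Finset.sum_congr rfl
  intro j hj
  rw [expand_pow j, Finset.mul_sum]
  apply Finset.sum_congr rfl
  intro n _
  rw [← mul_assoc, ← map_mul,
    show (-1:ℚ)^n * (j.choose n:ℚ) * b j = b j * ((-1)^n * (j.choose n:ℚ)) from by ring]


/-- Dilcher-type identity (Sakugawa–Seki): for an index `𝕜 = (k_1, …, k_m)` with Hoffman dual
`𝕜^∨ = (k'_1, …, k'_{m'})` (characterized by: the comma set of `𝕜^∨` is the complement of the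
comma set of `𝕜` in `{1, …, wt(𝕜) - 1}`) and a positive integer `N`, the polynomial identity
`∑_{N ≥ n_1 ≥ ⋯ ≥ n_m ≥ 1} (-1)^{n_1} C(N, n_1) t^{n_m}/(n_1^{k_1} ⋯ n_m^{k_m})
  = ∑_{N ≥ n_1 ≥ ⋯ ≥ n_{m'} ≥ 1} ((1-t)^{n_{m'}} - 1)/(n_1^{k'_1} ⋯ n_{m'}^{k'_{m'}})`
holds in `ℚ[t]`. -/
theorem dilcher_type_identity (m m' N : ℕ) (hm : 0 < m) (hm' : 0 < m') (hN : 0 < N)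
    (k : Fin m → ℕ) (k' : Fin m' → ℕ) (hk : ∀ i, 0 < k i) (hk' : ∀ i, 0 < k' i)
    (hwt : ∑ i, k' i = ∑ i, k i)
    (hdual : ∀ x : ℕ, x ∈ commaSet k' ↔ (0 < x ∧ x < ∑ i, k i ∧ x ∉ commaSet k)) :
    ∑ n ∈ decTuples m N,
        C ((-1 : ℚ) ^ (n ⟨0, hm⟩) * (N.choose (n ⟨0, hm⟩) : ℚ) / ∏ i, (n i : ℚ) ^ (k i))
          * X ^ (n ⟨m - 1, by omega⟩)
      = ∑ n ∈ decTuples m' N,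
          C ((1 : ℚ) / ∏ i, (n i : ℚ) ^ (k' i))
            * ((1 - X) ^ (n ⟨m' - 1, by omega⟩) - 1) := by
  obtain ⟨mm, rfl⟩ : ∃ mm, m = mm + 1 := ⟨m - 1, by omega⟩
  obtain ⟨mm', rfl⟩ : ∃ mm', m' = mm' + 1 := ⟨m' - 1, by omega⟩
  have hcl : commaSet k = fS (List.ofFn fun i : Fin mm => k i.castSucc) := commaSet_eq k hk
  have hcr : commaSet k' = fS (List.ofFn fun i : Fin mm' => k' i.castSucc) := commaSet_eq k' hk'
  have hlsum : (List.ofFn fun i : Fin mm => k i.castSucc).sum + k (Fin.last mm) = ∑ i, k i := by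
    rw [List.sum_ofFn, ← Fin.sum_univ_castSucc]
  have hrsum : (List.ofFn fun i : Fin mm' => k' i.castSucc).sum + k' (Fin.last mm') = ∑ i, k i := by
    rw [List.sum_ofFn, ← Fin.sum_univ_castSucc]
    exact hwt
  have hdual' : ∀ x, x ∈ fS (List.ofFn fun i : Fin mm' => k' i.castSucc) ↔
      0 < x ∧ x < ∑ i, k i ∧ x ∉ fS (List.ofFn fun i : Fin mm => k i.castSucc) := by
    intro x
    rw [← hcl, ← hcr]
    exact hdual x
  have hposl : ∀ x ∈ (List.ofFn fun i : Fin mm => k i.castSucc), 0 < x := by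
    intro x hx
    rw [List.mem_ofFn] at hx
    obtain ⟨i, rfl⟩ := hx
    exact hk _
  have hposr : ∀ x ∈ (List.ofFn fun i : Fin mm' => k' i.castSucc), 0 < x := by
    intro x hx
    rw [List.mem_ofFn] at hx
    obtain ⟨i, rfl⟩ := hx
    exact hk' _
  have hkey : ∀ n, 1 ≤ n → n ≤ N →
      ((n:ℚ)^(k (Fin.last mm)))⁻¹ * Vf N (List.ofFn fun i : Fin mm => k i.castSucc).reverse n
        = (-1)^n * ∑ j ∈ Icc n N, (j.choose n : ℚ)
            * (((j:ℚ)^(k' (Fin.last mm')))⁻¹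
              * Wf N (List.ofFn fun i : Fin mm' => k' i.castSucc).reverse j) :=
    key_lemma N (∑ i, k i) (List.ofFn fun i : Fin mm => k i.castSucc)
      (List.ofFn fun i : Fin mm' => k' i.castSucc) (k (Fin.last mm)) (k' (Fin.last mm'))
      (hk _) (hk' _) hposl hposr hlsum hrsum hdual'
  have hL := assembleL N mm k (fun n => X^n)
  have hR := assembleR N mm' k' (fun n => (1-X)^n - 1)
  have hmid := final_sum N
    (fun j => ((j:ℚ)^(k (Fin.last mm)))⁻¹ * Vf N (List.ofFn fun i : Fin mm => k i.castSucc).reverse j)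
    (fun j => ((j:ℚ)^(k' (Fin.last mm')))⁻¹ * Wf N (List.ofFn fun i : Fin mm' => k' i.castSucc).reverse j)
    hkey
  exact hL.trans (hmid.trans hR.symm)
end

section
/- (Dilcher's identity) For positive integers N, m and $1 \le l \le N$: $\sum_{j=1}^{l} \binom{l}{j} \frac{(-1)^{j-1}}{j^{m}} = \sum_{l \geq n_1 \geq \cdots \geq n_{m} \geq 1} \frac{1}{n_1 \cdots n_{m}}$, an identity of rational numbers. -/
open Finset

lemma mem_decTuples {m N : ℕ} {n : Fin m → ℕ} :
    n ∈ decTuples m N ↔ (∀ i, 1 ≤ n i ∧ n i ≤ N) ∧ ∀ i j : Fin m, i ≤ j → n j ≤ n i := by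
  simp [decTuples, Fintype.mem_piFinset, and_comm]

lemma decTuples_zero (N : ℕ) : decTuples 0 N = {Fin.elim0} := by
  ext n
  simp only [mem_decTuples, Finset.mem_singleton]
  constructor
  · intro _; funext i; exact i.elim0
  · intro _; exact ⟨fun i => i.elim0, fun i => i.elim0⟩

lemma decTuples_succ_sum {m l : ℕ} (f : (Fin (m + 1) → ℕ) → ℚ) :
    ∑ n ∈ decTuples (m + 1) l, f n
      = ∑ k ∈ Finset.Icc 1 l, ∑ n ∈ decTuples m k, f (Fin.cons k n) := by
  rw [← Finset.sum_sigma (Finset.Icc 1 l) (fun k => decTuples m k)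
      (fun p => f (Fin.cons p.1 p.2))]
  refine Finset.sum_bij' (fun n _ => (⟨n 0, Fin.tail n⟩ : Σ _ : ℕ, Fin m → ℕ))
    (fun p _ => Fin.cons p.1 p.2) ?_ ?_ ?_ ?_ ?_
  · intro n hn
    rw [mem_decTuples] at hn
    rw [Finset.mem_sigma, Finset.mem_Icc, mem_decTuples]
    refine ⟨⟨(hn.1 0).1, (hn.1 0).2⟩, fun i => ⟨(hn.1 i.succ).1, hn.2 0 i.succ (Fin.zero_le _)⟩,
      fun i j hij => hn.2 i.succ j.succ (by simpa using hij)⟩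
  · rintro ⟨k, n⟩ hp
    rw [Finset.mem_sigma, Finset.mem_Icc, mem_decTuples] at hp
    rw [mem_decTuples]
    constructor
    · intro i
      refine i.cases ?_ ?_
      · simpa using hp.1
      · intro i; exact ⟨(hp.2.1 i).1, le_trans (hp.2.1 i).2 hp.1.2⟩
    · intro i j hij
      refine i.cases (fun hij => ?_) (fun i hij => ?_) hij
      · refine j.cases ?_ (fun j => ?_)
        · simp
        · simpa using le_trans (hp.2.1 j).2 (le_refl k)
      · refine j.cases (fun h => ?_) (fun j h => ?_) hij
        · exact absurd h (by simp [Fin.le_def])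
        · simpa using hp.2.2 i j (by simpa using h)
  · intro n _; exact Fin.cons_self_tail n
  · rintro ⟨k, n⟩ _; simp
  · intro n _; rw [Fin.cons_self_tail]

lemma lhs_zero (l : ℕ) (hl : 1 ≤ l) :
    ∑ j ∈ Finset.Icc 1 l, (l.choose j : ℚ) * (-1) ^ (j - 1) = 1 := by
  have h : (∑ m ∈ range (l + 1), ((-1) ^ m * l.choose m : ℚ)) = 0 := by
    have := Int.alternating_sum_range_choose_of_ne (n := l) (by omega)
    exact_mod_cast this
  rw [Finset.sum_range_succ'] at h
  have h2 : (∑ i ∈ range l, ((-1 : ℚ)) ^ i * l.choose (i + 1)) = 1 := by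
    have e : ∀ i ∈ range l, ((-1 : ℚ)) ^ (i + 1) * l.choose (i + 1)
        = -(((-1 : ℚ)) ^ i * l.choose (i + 1)) := fun i _ => by ring
    rw [Finset.sum_congr rfl e, Finset.sum_neg_distrib] at h
    simp at h
    linarith
  rw [← Finset.Ico_add_one_right_eq_Icc, Finset.sum_Ico_eq_sum_range, Nat.add_sub_cancel]
  calc ∑ i ∈ range l, (l.choose (1 + i) : ℚ) * (-1) ^ (1 + i - 1)
      = ∑ i ∈ range l, ((-1 : ℚ)) ^ i * l.choose (i + 1) := by
        refine Finset.sum_congr rfl fun i _ => by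
          rw [show 1 + i - 1 = i by omega, add_comm 1 i]; ring
    _ = 1 := h2

lemma hockey (j l : ℕ) (hj : 1 ≤ j) (hjl : j ≤ l) :
    ∑ k ∈ Finset.Icc j l, ((k - 1).choose (j - 1) : ℚ) = l.choose j := by
  have key : ∑ k ∈ Finset.Icc j l, (k - 1).choose (j - 1) = l.choose j := by
    have h := Nat.sum_Icc_choose (l - 1) (j - 1)
    rw [show l - 1 + 1 = l by omega, show j - 1 + 1 = j by omega] at h
    rw [← h]
    refine Finset.sum_nbij' (fun k => k - 1) (fun i => i + 1) ?_ ?_ ?_ ?_ ?_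
    · simp only [Finset.mem_Icc]; intros; omega
    · simp only [Finset.mem_Icc]; intros; omega
    · simp only [Finset.mem_Icc]; intros; omega
    · simp only [Finset.mem_Icc]; intros; omega
    · intros; simp
  exact_mod_cast key

lemma term_eq (m k j : ℕ) (hj : 1 ≤ j) (hjk : j ≤ k) :
    (1 / (k : ℚ)) * ((k.choose j : ℚ) * (-1) ^ (j - 1) / (j : ℚ) ^ m)
      = ((k - 1).choose (j - 1) : ℚ) * ((-1) ^ (j - 1) / (j : ℚ) ^ (m + 1)) := by
  have hk : 1 ≤ k := le_trans hj hjk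
  have hnat : k * (k - 1).choose (j - 1) = k.choose j * j := by
    have := Nat.add_one_mul_choose_eq (k - 1) (j - 1)
    rwa [show k - 1 + 1 = k by omega,
      show j - 1 + 1 = j by omega] at this
  have hq : (k : ℚ) * ((k - 1).choose (j - 1) : ℚ) = (k.choose j : ℚ) * j := by
    exact_mod_cast congrArg (Nat.cast : ℕ → ℚ) hnat
  have hk0 : (k : ℚ) ≠ 0 := by positivity
  have hj0 : (j : ℚ) ≠ 0 := by positivity
  have hC : (k.choose j : ℚ) = (k : ℚ) * ((k - 1).choose (j - 1)) / j := by
    rw [eq_div_iff hj0]; linarith [hq]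
  rw [hC]
  field_simp
  ring

lemma lhs_succ (m l : ℕ) :
    ∑ j ∈ Finset.Icc 1 l, (l.choose j : ℚ) * (-1) ^ (j - 1) / (j : ℚ) ^ (m + 1)
      = ∑ k ∈ Finset.Icc 1 l, (1 / (k : ℚ))
          * ∑ j ∈ Finset.Icc 1 k, (k.choose j : ℚ) * (-1) ^ (j - 1) / (j : ℚ) ^ m := by
  have swap :
      ∑ k ∈ Finset.Icc 1 l, ∑ j ∈ Finset.Icc 1 k,
          (1 / (k : ℚ)) * ((k.choose j : ℚ) * (-1) ^ (j - 1) / (j : ℚ) ^ m)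
        = ∑ j ∈ Finset.Icc 1 l, ∑ k ∈ Finset.Icc j l,
            (1 / (k : ℚ)) * ((k.choose j : ℚ) * (-1) ^ (j - 1) / (j : ℚ) ^ m) := by
    refine Finset.sum_comm' fun k j => ?_
    simp only [Finset.mem_Icc]
    omega
  calc ∑ j ∈ Finset.Icc 1 l, (l.choose j : ℚ) * (-1) ^ (j - 1) / (j : ℚ) ^ (m + 1)
      = ∑ j ∈ Finset.Icc 1 l, ∑ k ∈ Finset.Icc j l,
          (1 / (k : ℚ)) * ((k.choose j : ℚ) * (-1) ^ (j - 1) / (j : ℚ) ^ m) := by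
        refine Finset.sum_congr rfl fun j hj => ?_
        rw [Finset.mem_Icc] at hj
        calc (l.choose j : ℚ) * (-1) ^ (j - 1) / (j : ℚ) ^ (m + 1)
            = (∑ k ∈ Finset.Icc j l, ((k - 1).choose (j - 1) : ℚ))
                * ((-1) ^ (j - 1) / (j : ℚ) ^ (m + 1)) := by
              rw [hockey j l hj.1 hj.2]; ring
          _ = ∑ k ∈ Finset.Icc j l,
                ((k - 1).choose (j - 1) : ℚ) * ((-1) ^ (j - 1) / (j : ℚ) ^ (m + 1)) :=
              Finset.sum_mul _ _ _
          _ = _ := by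
              refine Finset.sum_congr rfl fun k hk => ?_
              rw [Finset.mem_Icc] at hk
              exact (term_eq m k j hj.1 hk.1).symm
    _ = ∑ k ∈ Finset.Icc 1 l, ∑ j ∈ Finset.Icc 1 k,
          (1 / (k : ℚ)) * ((k.choose j : ℚ) * (-1) ^ (j - 1) / (j : ℚ) ^ m) := swap.symm
    _ = _ := by
        refine Finset.sum_congr rfl fun k _ => ?_
        rw [Finset.mul_sum]

lemma dilcher_aux (m : ℕ) : ∀ l : ℕ, 1 ≤ l →
    ∑ j ∈ Finset.Icc 1 l, (l.choose j : ℚ) * (-1) ^ (j - 1) / (j : ℚ) ^ m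
      = ∑ n ∈ decTuples m l, 1 / ∏ i, (n i : ℚ) := by
  induction m with
  | zero =>
    intro l hl
    rw [decTuples_zero]
    simpa using lhs_zero l hl
  | succ m ih =>
    intro l hl
    rw [lhs_succ, decTuples_succ_sum (f := fun n => 1 / ∏ i, (n i : ℚ))]
    refine Finset.sum_congr rfl fun k hk => ?_
    rw [Finset.mem_Icc] at hk
    rw [ih k hk.1, Finset.mul_sum]
    refine Finset.sum_congr rfl fun n hn => ?_
    have hprod : (∏ i, ((Fin.cons k n : Fin (m + 1) → ℕ) i : ℚ))
        = (k : ℚ) * ∏ i, (n i : ℚ) := by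
      rw [Fin.prod_univ_succ]
      simp
    rw [hprod, one_div_mul_one_div_rev, mul_comm]

/-- Dilcher's identity: for positive integers `N`, `m` and `1 ≤ l ≤ N`,
`∑_{j=1}^{l} C(l,j) (-1)^(j-1) / j^m = ∑_{l ≥ n_1 ≥ ⋯ ≥ n_m ≥ 1} 1/(n_1 ⋯ n_m)` in `ℚ`. -/
theorem dilcher_identity (N l m : ℕ) (hN : 0 < N) (hm : 0 < m) (hl1 : 1 ≤ l) (hlN : l ≤ N) :
    ∑ j ∈ Finset.Icc 1 l, (l.choose j : ℚ) * (-1) ^ (j - 1) / (j : ℚ) ^ m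
      = ∑ n ∈ decTuples m l, 1 / ∏ i, (n i : ℚ) := by
  exact dilcher_aux m l hl1
end

section
/- Let p be a prime and $\Bbbk$ an index with Hoffman dual $\Bbbk^\vee$. Then $\widetilde{\text{£}}^{\star}_{p, \Bbbk}(t) \equiv \widetilde{\text{£}}^{\star}_{p, \Bbbk^{\vee}}(1-t) - \zeta^{\star}_p(\Bbbk^\vee) \pmod{p}$, as polynomials in $\mathbb{Z}_{(p)}[t]$ with coefficients compared modulo p. -/
open Polynomial

/-- `c ∈ p ℤ_(p)`. -/
def InPZp (p : ℕ) (c : ℚ) : Prop :=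
  ∃ a b : ℤ, ¬ (p : ℤ) ∣ b ∧ (b : ℚ) * c = (p : ℚ) * (a : ℚ)

/-- The one-variable finite star-multiple polylogarithm
`£̃^⋆_{p,𝕜}(t) = ∑_{p-1 ≥ n_1 ≥ ⋯ ≥ n_m ≥ 1} t^{n_m}/(n_1^{k_1} ⋯ n_m^{k_m})`,
as a polynomial over `ℚ` (its coefficients lie in `ℤ_(p)`). -/
noncomputable def LstarTilde (p m : ℕ) (hm : 0 < m) (k : Fin m → ℕ) : Polynomial ℚ :=
  ∑ n ∈ decTuples m (p - 1),
    C ((1 : ℚ) / ∏ i, (n i : ℚ) ^ (k i)) * X ^ (n ⟨m - 1, by omega⟩)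

namespace HDual
open Finset

set_option linter.unusedSectionVars false

variable {K : Type} [Field K]

noncomputable def TT : List Bool → ℕ → K[X]
  | [], n => C ((n : K)⁻¹) * X ^ n
  | (true :: w), n => C ((n : K)⁻¹) * TT w n
  | (false :: w), n => C ((n : K)⁻¹) * ∑ j ∈ Finset.Icc 1 n, TT w j

noncomputable def SS (w : List Bool) (N : ℕ) : K[X] := ∑ n ∈ Finset.Icc 1 N, TT w n

lemma mulsum (c : K) (g : ℕ → K[X]) (s : Finset ℕ) (q : K[X]) :
    q * (C c * ∑ j ∈ s, g j) = C c * ∑ j ∈ s, q * g j := by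
  rw [Finset.mul_sum, Finset.mul_sum, Finset.mul_sum]
  exact Finset.sum_congr rfl fun j _ => by ring

lemma telescope (n : ℕ) : ∑ j ∈ Finset.Icc 1 n, ((X : K[X]) ^ j - X ^ (j-1)) = X ^ n - 1 := by
  rw [← Finset.Ico_add_one_right_eq_Icc, Finset.sum_Ico_eq_sum_range]
  have h : ∀ k, (X : K[X]) ^ (1 + k) - X ^ (1 + k - 1) = X ^ (k+1) - X ^ k := by
    intro k; congr 2 <;> omega
  rw [Finset.sum_congr rfl fun k _ => h k, show n + 1 - 1 = n by omega,
    Finset.sum_range_sub (fun i => (X : K[X]) ^ i)]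
  simp

lemma deriv_TT_nil (n : ℕ) (hn : (n : K) ≠ 0) :
    derivative (TT [] n : K[X]) = X ^ (n - 1) := by
  show derivative (C ((n : K)⁻¹) * X ^ n) = _
  rw [derivative_C_mul, derivative_X_pow, ← mul_assoc, ← C_mul, inv_mul_cancel₀ (by exact_mod_cast hn), C_1, one_mul]

variable (p : ℕ) [Fact p.Prime]

lemma nz {j : ℕ} (h1 : 1 ≤ j) (h2 : j < p) : ((j : ZMod p) ≠ 0) := by
  rw [Ne, ZMod.natCast_eq_zero_iff]
  intro hd
  exact absurd (Nat.le_of_dvd h1 hd) (by omega)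

lemma LA_T : ∀ (w : List Bool) (n : ℕ), 1 ≤ n → n < p →
    X * derivative (TT (w ++ [true]) n : (ZMod p)[X]) = TT w n := by
  intro w
  induction w with
  | nil =>
    intro n h1 h2
    have hn := nz p h1 h2
    show X * derivative (C ((n : ZMod p)⁻¹) * TT [] n) = C ((n : ZMod p)⁻¹) * X ^ n
    rw [derivative_C_mul, deriv_TT_nil n hn]
    rw [show (X : (ZMod p)[X]) * (C ((n : ZMod p)⁻¹) * X ^ (n-1)) = C ((n : ZMod p)⁻¹) * (X * X ^ (n-1)) by ring, ← pow_succ', show n - 1 + 1 = n by omega]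
  | cons b w ih =>
    intro n h1 h2
    cases b with
    | true =>
      show X * derivative (C ((n : ZMod p)⁻¹) * TT (w ++ [true]) n) = C ((n : ZMod p)⁻¹) * TT w n
      rw [derivative_C_mul, show (X : (ZMod p)[X]) * (C ((n : ZMod p)⁻¹) * derivative (TT (w ++ [true]) n)) = C ((n : ZMod p)⁻¹) * (X * derivative (TT (w ++ [true]) n)) by ring, ih n h1 h2]
    | false =>
      show X * derivative (C ((n : ZMod p)⁻¹) * ∑ j ∈ Finset.Icc 1 n, TT (w ++ [true]) j)
        = C ((n : ZMod p)⁻¹) * ∑ j ∈ Finset.Icc 1 n, TT w j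
      rw [derivative_C_mul, derivative_sum, mulsum]
      congr 1
      refine Finset.sum_congr rfl fun j hj => ?_
      simp only [Finset.mem_Icc] at hj
      exact ih j hj.1 (by omega)

lemma LB_T : ∀ (w : List Bool) (n : ℕ), 1 ≤ n → n < p →
    (X - 1) * derivative (TT (w ++ [false]) n : (ZMod p)[X])
      = TT w n - C (eval 1 (TT w n)) := by
  intro w
  induction w with
  | nil =>
    intro n h1 h2
    show (X - 1) * derivative (C ((n : ZMod p)⁻¹) * ∑ j ∈ Finset.Icc 1 n, TT [] j) = _
    rw [derivative_C_mul, derivative_sum, mulsum]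
    have h1' : ∀ j ∈ Finset.Icc 1 n, ((X : (ZMod p)[X]) - 1) * derivative (TT [] j)
        = X ^ j - X ^ (j - 1) := by
      intro j hj
      simp only [Finset.mem_Icc] at hj
      rw [deriv_TT_nil j (nz p hj.1 (by omega)), sub_mul, one_mul, ← pow_succ',
        show j - 1 + 1 = j by omega]
    rw [Finset.sum_congr rfl h1', telescope]
    show _ = TT [] n - C (eval 1 (TT [] n))
    rw [show (TT [] n : (ZMod p)[X]) = C ((n : ZMod p)⁻¹) * X ^ n from rfl]
    simp [mul_sub]
  | cons b w ih =>
    intro n h1 h2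
    cases b with
    | true =>
      show (X - 1) * derivative (C ((n : ZMod p)⁻¹) * TT (w ++ [false]) n)
        = C ((n : ZMod p)⁻¹) * TT w n - C (eval 1 (C ((n : ZMod p)⁻¹) * TT w n))
      rw [derivative_C_mul,
        show ((X : (ZMod p)[X]) - 1) * (C ((n : ZMod p)⁻¹) * derivative (TT (w ++ [false]) n)) = C ((n : ZMod p)⁻¹) * ((X - 1) * derivative (TT (w ++ [false]) n)) by ring,
        ih n h1 h2, eval_mul, eval_C, C_mul, mul_sub]
    | false =>
      show (X - 1) * derivative (C ((n : ZMod p)⁻¹) * ∑ j ∈ Finset.Icc 1 n, TT (w ++ [false]) j)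
        = C ((n : ZMod p)⁻¹) * ∑ j ∈ Finset.Icc 1 n, TT w j
          - C (eval 1 (C ((n : ZMod p)⁻¹) * ∑ j ∈ Finset.Icc 1 n, TT w j))
      rw [derivative_C_mul, derivative_sum, mulsum]
      have h1' : ∀ j ∈ Finset.Icc 1 n, ((X : (ZMod p)[X]) - 1) * derivative (TT (w ++ [false]) j) = TT w j - C (eval 1 (TT w j)) := by
        intro j hj
        simp only [Finset.mem_Icc] at hj
        exact ih j hj.1 (by omega)
      rw [Finset.sum_congr rfl h1', Finset.sum_sub_distrib, eval_mul, eval_C,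
        Polynomial.eval_finset_sum, C_mul, mul_sub]
      congr 2
      rw [map_sum]

noncomputable def hh : List ℕ → ℕ → K[X]
  | [], n => X ^ n
  | (e :: l), N => ∑ n ∈ Finset.Icc 1 N, C (((n : K))⁻¹ ^ e) * hh l n

def wordOfL : List ℕ → List Bool
  | [] => []
  | [e] => List.replicate (e - 1) true
  | e :: l => List.replicate (e - 1) true ++ false :: wordOfL l

def psumsL : List ℕ → Finset ℕ
  | [] => ∅
  | [_] => ∅
  | e :: l => insert e ((psumsL l).image (e + ·))

lemma TT_replicate_append (e : ℕ) (w : List Bool) (n : ℕ) :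
    (TT (List.replicate e true ++ w) n : K[X]) = C ((n : K)⁻¹ ^ e) * TT w n := by
  induction e with
  | zero => simp [List.replicate]
  | succ e ih => simp [List.replicate_succ, TT, ih, pow_succ]; ring

lemma hh_eq_SS : ∀ (l : List ℕ), (∀ x ∈ l, 0 < x) → l ≠ [] → ∀ N,
    (hh l N : K[X]) = SS (wordOfL l) N := by
  intro l
  induction l with
  | nil => intro _ h; exact absurd rfl h
  | cons e l ih =>
    intro hpos _ N
    have he : 0 < e := hpos e (by simp)
    match l with
    | [] =>
      show _ = SS (wordOfL [e]) N
      unfold SS wordOfL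
      refine Finset.sum_congr rfl fun n hn => ?_
      have : List.replicate (e-1) true = List.replicate (e-1) true ++ ([] : List Bool) := by simp
      rw [this, TT_replicate_append]
      show C (((n : K))⁻¹ ^ e) * X ^ n = _
      rw [show TT [] n = C ((n : K)⁻¹) * X ^ n from rfl]
      have h : ((n : K))⁻¹ ^ e = ((n : K))⁻¹ ^ (e - 1) * ((n : K))⁻¹ := by
        rw [← pow_succ]; congr 1; omega
      rw [h, C_mul]; ring
    | f :: l' =>
      show _ = SS (wordOfL (e :: f :: l')) N
      unfold SS
      rw [show wordOfL (e :: f :: l') = List.replicate (e - 1) true ++ false :: wordOfL (f :: l') from rfl]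
      refine Finset.sum_congr rfl fun n hn => ?_
      rw [TT_replicate_append]
      rw [show TT (false :: wordOfL (f :: l')) n
            = C ((n : K)⁻¹) * ∑ j ∈ Finset.Icc 1 n, TT (wordOfL (f :: l')) j from rfl]
      have : ∑ j ∈ Finset.Icc 1 n, (TT (wordOfL (f :: l')) j : K[X]) = hh (f :: l') n := by
        rw [ih (fun x hx => hpos x (by simp [hx])) (by simp) n]; rfl
      rw [this]
      have h : ((n : K))⁻¹ ^ e = ((n : K))⁻¹ ^ (e - 1) * ((n : K))⁻¹ := by
        rw [← pow_succ]; congr 1; omega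
      rw [h, C_mul]; ring


lemma eval0_TT : ∀ (w : List Bool) (n : ℕ), 1 ≤ n → eval 0 (TT w n : K[X]) = 0 := by
  intro w
  induction w with
  | nil => intro n h1; show eval 0 (C ((n : K)⁻¹) * X ^ n) = 0
           simp [zero_pow (by omega : n ≠ 0)]
  | cons b w ih =>
    intro n h1
    cases b with
    | true => show eval 0 (C ((n : K)⁻¹) * TT w n) = 0
              rw [eval_mul, ih n h1, mul_zero]
    | false =>
      show eval 0 (C ((n : K)⁻¹) * ∑ j ∈ Finset.Icc 1 n, TT w j) = 0
      rw [eval_mul, Polynomial.eval_finset_sum]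
      have : ∀ j ∈ Finset.Icc 1 n, eval 0 (TT w j : K[X]) = 0 := by
        intro j hj
        simp only [Finset.mem_Icc] at hj
        exact ih j hj.1
      rw [Finset.sum_congr rfl this]
      simp

lemma natDegree_TT : ∀ (w : List Bool) (n : ℕ), (TT w n : K[X]).natDegree ≤ n := by
  intro w
  induction w with
  | nil =>
    intro n
    show (C ((n : K)⁻¹) * X ^ n).natDegree ≤ n
    exact le_trans (natDegree_C_mul_le _ _) (by simp)
  | cons b w ih =>
    intro n
    cases b with
    | true =>
      show (C ((n : K)⁻¹) * TT w n).natDegree ≤ n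
      exact le_trans (natDegree_C_mul_le _ _) (ih n)
    | false =>
      show (C ((n : K)⁻¹) * ∑ j ∈ Finset.Icc 1 n, TT w j).natDegree ≤ n
      refine le_trans (natDegree_C_mul_le _ _) ?_
      refine Polynomial.natDegree_sum_le_of_forall_le _ _ fun j hj => ?_
      simp only [Finset.mem_Icc] at hj
      exact le_trans (ih j) hj.2

lemma eval0_SS (w : List Bool) (N : ℕ) : eval 0 (SS w N : K[X]) = 0 := by
  unfold SS
  rw [Polynomial.eval_finset_sum]
  refine Finset.sum_eq_zero fun n hn => ?_
  simp only [Finset.mem_Icc] at hn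
  exact eval0_TT w n hn.1

lemma natDegree_SS (w : List Bool) (N : ℕ) : (SS w N : K[X]).natDegree ≤ N := by
  unfold SS
  refine Polynomial.natDegree_sum_le_of_forall_le _ _ fun n hn => ?_
  simp only [Finset.mem_Icc] at hn
  exact le_trans (natDegree_TT w n) hn.2

variable (p : ℕ) [Fact p.Prime]

lemma zero_of_deriv (f : (ZMod p)[X]) (hd : derivative f = 0) (hdeg : f.natDegree < p)
    (h0 : f.coeff 0 = 0) : f = 0 := by
  ext d
  cases d with
  | zero => simpa using h0
  | succ e =>
    rcases le_or_gt (e + 1) f.natDegree with h | h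
    · have := congrArg (fun g => Polynomial.coeff g e) hd
      simp only [Polynomial.coeff_derivative, Polynomial.coeff_zero] at this
      have hne : ((e : ZMod p) + 1) ≠ 0 := by
        have : (((e+1 : ℕ)) : ZMod p) ≠ 0 := by
          rw [Ne, ZMod.natCast_eq_zero_iff]
          intro hdvd
          have := Nat.le_of_dvd (by omega) hdvd
          omega
        push_cast at this
        exact this
      have := mul_eq_zero.mp this
      simp only [coeff_zero]
      tauto
    · simp [Polynomial.coeff_eq_zero_of_natDegree_lt h]

lemma SA (w : List Bool) (N : ℕ) (hN : N < p) :
    X * derivative (SS (w ++ [true]) N : (ZMod p)[X]) = SS w N := by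
  unfold SS
  rw [derivative_sum, Finset.mul_sum]
  refine Finset.sum_congr rfl fun n hn => ?_
  simp only [Finset.mem_Icc] at hn
  exact LA_T p w n hn.1 (by omega)

lemma SB (w : List Bool) (N : ℕ) (hN : N < p) :
    (X - 1) * derivative (SS (w ++ [false]) N : (ZMod p)[X])
      = SS w N - C (eval 1 (SS w N)) := by
  unfold SS
  rw [derivative_sum, Finset.mul_sum, Polynomial.eval_finset_sum, map_sum,
    ← Finset.sum_sub_distrib]
  refine Finset.sum_congr rfl fun n hn => ?_
  simp only [Finset.mem_Icc] at hn
  exact LB_T p w n hn.1 (by omega)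

lemma SnilA : (X - 1) * derivative (SS [] (p-1) : (ZMod p)[X]) = X ^ (p-1) - 1 := by
  unfold SS
  rw [derivative_sum, Finset.mul_sum]
  have : ∀ n ∈ Finset.Icc 1 (p-1), ((X : (ZMod p)[X]) - 1) * derivative (TT [] n)
      = X ^ n - X ^ (n - 1) := by
    intro n hn
    simp only [Finset.mem_Icc] at hn
    rw [deriv_TT_nil n (nz p hn.1 (by omega)), sub_mul, one_mul, ← pow_succ',
      show n - 1 + 1 = n by omega]
  rw [Finset.sum_congr rfl this, telescope]

lemma deriv_comp_one_sub_X (g : (ZMod p)[X]) :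
    derivative (g.comp (1 - X)) = -((derivative g).comp (1 - X)) := by
  rw [Polynomial.derivative_comp]
  simp

lemma Dzero (f g : (ZMod p)[X]) (hdf : f.natDegree ≤ p - 1) (hdg : g.natDegree ≤ p - 1)
    (h0f : eval 0 f = 0) (h0g : eval 0 g = 0)
    (hd : derivative (f - (g.comp (1 - X) - C (eval 1 g))) = 0) :
    f = g.comp (1 - X) - C (eval 1 g) := by
  have hp2 : 2 ≤ p := (Fact.out : p.Prime).two_le
  have h1 : (f - (g.comp (1 - X) - C (eval 1 g))) = 0 := by
    apply zero_of_deriv p _ hd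
    · have hcomp : (g.comp (1 - X)).natDegree ≤ p - 1 := by
        refine le_trans natDegree_comp_le ?_
        have : (1 - X : (ZMod p)[X]).natDegree ≤ 1 := by
          refine le_trans (natDegree_sub_le _ _) ?_
          simp
        calc g.natDegree * (1 - X : (ZMod p)[X]).natDegree ≤ g.natDegree * 1 :=
              Nat.mul_le_mul_left _ this
          _ ≤ p - 1 := by simpa using hdg
      have : (f - (g.comp (1 - X) - C (eval 1 g))).natDegree ≤ p - 1 := by
        refine le_trans (natDegree_sub_le _ _) ?_
        refine max_le hdf ?_
        refine le_trans (natDegree_sub_le _ _) ?_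
        exact max_le hcomp (by simp)
      omega
    · rw [Polynomial.coeff_zero_eq_eval_zero]
      rw [eval_sub, eval_sub, Polynomial.eval_comp]
      simp [h0f, h0g]
  exact sub_eq_zero.mp h1

theorem main : ∀ w : List Bool,
    (SS w (p-1) : (ZMod p)[X]) = (SS (w.map not) (p-1)).comp (1 - X)
      - C (eval 1 (SS (w.map not) (p-1))) := by
  have hp2 : 2 ≤ p := (Fact.out : p.Prime).two_le
  have hN : p - 1 < p := by omega
  have hXne : (X : (ZMod p)[X]) ≠ 0 := X_ne_zero
  have hXm1ne : (X - 1 : (ZMod p)[X]) ≠ 0 := by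
    intro h
    have := congrArg (eval 0) h
    simp at this
  intro w
  induction w using List.reverseRecOn with
  | nil =>
    simp only [List.map_nil]
    apply Dzero p _ _ (natDegree_SS _ _) (natDegree_SS _ _) (eval0_SS _ _) (eval0_SS _ _)
    set A := derivative (SS [] (p-1) : (ZMod p)[X]) with hAdef
    have hD : derivative ((SS [] (p-1) : (ZMod p)[X])
        - ((SS [] (p-1)).comp (1 - X) - C (eval 1 (SS [] (p-1)))))
        = A + A.comp (1 - X) := by
      rw [derivative_sub, derivative_sub, deriv_comp_one_sub_X, derivative_C]
      ring
    rw [hD]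
    have hA : ((X : (ZMod p)[X]) - 1) * A = X ^ (p-1) - 1 := SnilA p
    have hB : (-X : (ZMod p)[X]) * A.comp (1 - X) = (1 - X) ^ (p-1) - 1 := by
      have := congrArg (fun q => q.comp (1 - X : (ZMod p)[X])) hA
      simp only [mul_comp, sub_comp, X_comp, one_comp, pow_comp] at this
      rw [show ((1:(ZMod p)[X]) - X - 1) = -X by ring] at this
      exact this
    have hfrob : ((1:(ZMod p)[X]) - X) ^ p = 1 - X ^ p := by
      rw [sub_pow_char]
      simp
    have hx : (X : (ZMod p)[X]) * X ^ (p-1) = X ^ p := by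
      rw [← pow_succ']
      congr 1
      omega
    have hy : ((1:(ZMod p)[X]) - X) * (1 - X) ^ (p-1) = (1 - X) ^ p := by
      rw [← pow_succ']
      congr 1
      omega
    have key : (X : (ZMod p)[X]) * ((X - 1) * (A + A.comp (1 - X))) = 0 := by
      have e1 : (X : (ZMod p)[X]) * ((X - 1) * (A + A.comp (1 - X)))
          = X * ((X-1)*A) - (X-1)*((-X) * A.comp (1 - X)) := by ring
      rw [e1, hA, hB]
      have e2 : (X : (ZMod p)[X]) * (X ^ (p-1) - 1) - (X-1) * ((1-X)^(p-1) - 1)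
          = X * X^(p-1) + (1-X) * (1-X)^(p-1) - 1 := by ring
      rw [e2, hx, hy, hfrob]
      ring
    have h1 : ((X : (ZMod p)[X]) - 1) * (A + A.comp (1 - X)) = 0 := by
      rcases mul_eq_zero.mp key with h | h
      · exact absurd h hXne
      · exact h
    rcases mul_eq_zero.mp h1 with h | h
    · exact absurd h hXm1ne
    · exact h
  | append_singleton v b ih =>
    cases b with
    | true =>
      rw [List.map_append, show (List.map not [true]) = [false] from rfl]
      apply Dzero p _ _ (natDegree_SS _ _) (natDegree_SS _ _) (eval0_SS _ _) (eval0_SS _ _)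
      set u := v.map not with hu
      set g := (SS (u ++ [false]) (p-1) : (ZMod p)[X]) with hg
      have hD : derivative ((SS (v ++ [true]) (p-1) : (ZMod p)[X])
          - (g.comp (1 - X) - C (eval 1 g)))
          = derivative (SS (v ++ [true]) (p-1)) + (derivative g).comp (1 - X) := by
        rw [derivative_sub, derivative_sub, deriv_comp_one_sub_X, derivative_C]
        ring
      rw [hD]
      have hSA : X * derivative (SS (v ++ [true]) (p-1) : (ZMod p)[X]) = SS v (p-1) :=
        SA p v (p-1) hN
      have hSB : ((X : (ZMod p)[X]) - 1) * derivative g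
          = SS u (p-1) - C (eval 1 (SS u (p-1))) := SB p u (p-1) hN
      have hSBc : (-X : (ZMod p)[X]) * (derivative g).comp (1 - X)
          = (SS u (p-1)).comp (1 - X) - C (eval 1 (SS u (p-1))) := by
        have := congrArg (fun q => q.comp (1 - X : (ZMod p)[X])) hSB
        simp only [mul_comp, sub_comp, X_comp, one_comp, C_comp] at this
        rw [show ((1:(ZMod p)[X]) - X - 1) = -X by ring] at this
        exact this
      have key : (X : (ZMod p)[X]) * (derivative (SS (v ++ [true]) (p-1))
          + (derivative g).comp (1 - X)) = 0 := by
        rw [mul_add, hSA, show (X : (ZMod p)[X]) * (derivative g).comp (1 - X)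
          = -((-X : (ZMod p)[X]) * (derivative g).comp (1 - X)) by ring, hSBc, ih]
        ring
      rcases mul_eq_zero.mp key with h | h
      · exact absurd h hXne
      · exact h
    | false =>
      rw [List.map_append, show (List.map not [false]) = [true] from rfl]
      apply Dzero p _ _ (natDegree_SS _ _) (natDegree_SS _ _) (eval0_SS _ _) (eval0_SS _ _)
      set u := v.map not with hu
      set g := (SS (u ++ [true]) (p-1) : (ZMod p)[X]) with hg
      have hD : derivative ((SS (v ++ [false]) (p-1) : (ZMod p)[X])
          - (g.comp (1 - X) - C (eval 1 g)))
          = derivative (SS (v ++ [false]) (p-1)) + (derivative g).comp (1 - X) := by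
        rw [derivative_sub, derivative_sub, deriv_comp_one_sub_X, derivative_C]
        ring
      rw [hD]
      have hSB : ((X : (ZMod p)[X]) - 1) * derivative (SS (v ++ [false]) (p-1))
          = SS v (p-1) - C (eval 1 (SS v (p-1))) := SB p v (p-1) hN
      have hSA : (X : (ZMod p)[X]) * derivative g = SS u (p-1) := SA p u (p-1) hN
      have hSAc : ((1 - X : (ZMod p)[X])) * (derivative g).comp (1 - X)
          = (SS u (p-1)).comp (1 - X) := by
        have := congrArg (fun q => q.comp (1 - X : (ZMod p)[X])) hSA
        simp only [mul_comp, X_comp] at this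
        exact this
      have hev : eval 1 (SS v (p-1) : (ZMod p)[X]) = - eval 1 (SS u (p-1) : (ZMod p)[X]) := by
        have := congrArg (eval 1) ih
        rw [eval_sub, Polynomial.eval_comp] at this
        simp only [eval_sub, eval_one, eval_X, sub_self, eval_C] at this
        rw [eval0_SS] at this
        simpa using this
      have key : ((X : (ZMod p)[X]) - 1) * (derivative (SS (v ++ [false]) (p-1))
          + (derivative g).comp (1 - X)) = 0 := by
        rw [mul_add, hSB, show ((X : (ZMod p)[X]) - 1) * (derivative g).comp (1 - X)
          = -((1 - X : (ZMod p)[X]) * (derivative g).comp (1 - X)) by ring, hSAc, hev, ih,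
          map_neg]
        ring
      rcases mul_eq_zero.mp key with h | h
      · exact absurd h hXm1ne
      · exact h

lemma mem_decTuples {m N : ℕ} {n : Fin m → ℕ} :
    n ∈ decTuples m N ↔ (∀ i, 1 ≤ n i ∧ n i ≤ N) ∧ ∀ i j : Fin m, i ≤ j → n j ≤ n i := by
  simp [decTuples, Fintype.mem_piFinset]

lemma decTuples_peel {M : Type} [AddCommMonoid M] (m N : ℕ) (f : (Fin (m+1) → ℕ) → M) :
    ∑ n ∈ decTuples (m+1) N, f n
      = ∑ a ∈ Finset.Icc 1 N, ∑ n' ∈ decTuples m a, f (Fin.cons a n') := by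
  have step : ∑ n ∈ decTuples (m+1) N, f n
      = ∑ x ∈ (Finset.Icc 1 N).sigma (fun a => decTuples m a), f (Fin.cons x.1 x.2) := by
    refine Finset.sum_nbij'
      (i := fun (n : Fin (m+1) → ℕ) => (⟨n 0, Fin.tail n⟩ : Σ _a : ℕ, (Fin m → ℕ)))
      (j := fun (x : Σ _a : ℕ, (Fin m → ℕ)) => Fin.cons x.1 x.2) ?_ ?_ ?_ ?_ ?_
    · intro n hn
      rw [mem_decTuples] at hn
      obtain ⟨hb, ha⟩ := hn
      refine Finset.mem_sigma.mpr ⟨?_, ?_⟩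
      · simp only [Finset.mem_Icc]
        exact hb 0
      · rw [mem_decTuples]
        constructor
        · intro i
          refine ⟨(hb i.succ).1, ?_⟩
          show n i.succ ≤ n 0
          exact ha 0 i.succ (Fin.zero_le _)
        · intro i j hij
          exact ha i.succ j.succ (by rwa [Fin.succ_le_succ_iff])
    · rintro ⟨a, n'⟩ hx
      rw [Finset.mem_sigma] at hx
      obtain ⟨haN, hn'⟩ := hx
      simp only [Finset.mem_Icc] at haN
      rw [mem_decTuples] at hn' ⊢
      obtain ⟨hb, ha⟩ := hn'
      constructor
      · intro i
        refine Fin.cases ?_ ?_ i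
        · simpa using haN
        · intro j
          simp only [Fin.cons_succ]
          exact ⟨(hb j).1, le_trans (hb j).2 haN.2⟩
      · intro i j
        refine Fin.cases ?_ ?_ i
        · refine Fin.cases ?_ ?_ j
          · intro _
            exact le_refl _
          · intro j' _
            simp only [Fin.cons_succ, Fin.cons_zero]
            exact (hb j').2
        · intro i'
          refine Fin.cases ?_ ?_ j
          · intro h
            exact absurd h (by simp [Fin.le_def])
          · intro j' h
            simp only [Fin.cons_succ]
            exact ha i' j' (by rwa [Fin.succ_le_succ_iff] at h)
    · intro n hn
      exact Fin.cons_self_tail n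
    · rintro ⟨a, n'⟩ hx
      simp [Fin.tail_cons]
    · intro n hn
      rw [Fin.cons_self_tail n]
  rw [step, Finset.sum_sigma]

lemma decTuples_zero (a : ℕ) : decTuples 0 a = {fun i => i.elim0} := by
  ext n
  simp only [mem_decTuples, Finset.mem_singleton]
  constructor
  · intro _
    funext i
    exact i.elim0
  · intro _
    exact ⟨fun i => i.elim0, fun i => i.elim0⟩

lemma LT : ∀ (m : ℕ) (k : Fin (m+1) → ℕ) (N : ℕ),
    (∑ n ∈ decTuples (m+1) N, C (∏ i, ((n i : K)⁻¹) ^ (k i)) * X ^ (n (Fin.last m)))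
      = hh (List.ofFn k) N := by
  intro m
  induction m with
  | zero =>
    intro k N
    rw [decTuples_peel]
    rw [show List.ofFn k = [k 0] by simp [List.ofFn_succ]]
    show _ = ∑ n ∈ Finset.Icc 1 N, C (((n : K))⁻¹ ^ (k 0)) * hh [] n
    refine Finset.sum_congr rfl fun a ha => ?_
    rw [decTuples_zero, Finset.sum_singleton]
    show _ = C (((a : K))⁻¹ ^ (k 0)) * X ^ a
    rw [Fin.prod_univ_one]
    norm_num [Fin.cons_zero]
  | succ m ih =>
    intro k N
    rw [decTuples_peel]
    rw [List.ofFn_succ]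
    show _ = ∑ a ∈ Finset.Icc 1 N, C (((a : K))⁻¹ ^ (k 0)) * hh (List.ofFn (fun i => k (Fin.succ i))) a
    refine Finset.sum_congr rfl fun a ha => ?_
    rw [← ih (fun i => k i.succ) a, Finset.mul_sum]
    refine Finset.sum_congr rfl fun n' hn' => ?_
    have hprod : (∏ i : Fin (m+2), ((((Fin.cons a n' : Fin (m+2) → ℕ) i) : K)⁻¹) ^ (k i))
        = ((a : K))⁻¹ ^ (k 0) * ∏ i : Fin (m+1), ((n' i : K)⁻¹) ^ (k i.succ) := by
      rw [Fin.prod_univ_succ]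
      simp [Fin.cons_succ, Fin.cons_zero]
    have hlast : (Fin.cons a n' : Fin (m+2) → ℕ) (Fin.last (m+1)) = n' (Fin.last m) := by
      rw [← Fin.succ_last, Fin.cons_succ]
    rw [hprod, hlast, C_mul]
    ring

lemma wordOfL_len : ∀ l : List ℕ, (∀ x ∈ l, 0 < x) → l ≠ [] →
    (wordOfL l).length + 1 = l.sum := by
  intro l
  induction l with
  | nil => intro _ h; exact absurd rfl h
  | cons e l ih =>
    intro hpos _
    have he : 0 < e := hpos e (by simp)
    match l with
    | [] => simp [wordOfL]; omega
    | f :: l' =>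
      have := ih (fun x hx => hpos x (by simp [hx])) (by simp)
      rw [show wordOfL (e :: f :: l') =
        List.replicate (e - 1) true ++ false :: wordOfL (f :: l') from rfl]
      simp only [List.length_append, List.length_replicate, List.length_cons, List.sum_cons] at *
      omega

lemma wordOfL_char : ∀ l : List ℕ, (∀ x ∈ l, 0 < x) →
    ∀ j (h : j < (wordOfL l).length), ((wordOfL l)[j] = false ↔ (j+1) ∈ psumsL l) := by
  intro l
  induction l with
  | nil => intro _ j h; simp [wordOfL] at h
  | cons e l ih =>
    intro hpos j h
    have he : 0 < e := hpos e (by simp)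
    match l with
    | [] =>
      simp only [show wordOfL [e] = List.replicate (e-1) true from rfl] at h ⊢
      rw [List.getElem_replicate]
      simp [psumsL]
    | f :: l' =>
      have hw : wordOfL (e :: f :: l') =
          List.replicate (e - 1) true ++ false :: wordOfL (f :: l') := rfl
      have hps : psumsL (e :: f :: l') = insert e ((psumsL (f :: l')).image (e + ·)) := rfl
      simp only [hw] at h ⊢
      rw [hps]
      have hlen : (List.replicate (e-1) true).length = e - 1 := by simp
      rcases lt_trichotomy j (e-1) with hj | hj | hj
      · rw [List.getElem_append_left (by omega)]
        rw [List.getElem_replicate]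
        simp only [Bool.true_eq_false, false_iff]
        intro hmem
        rcases Finset.mem_insert.mp hmem with hcc | hcc
        · omega
        · obtain ⟨y, _, hy⟩ := Finset.mem_image.mp hcc
          omega
      · rw [List.getElem_append_right (by omega)]
        have h0 : j - (List.replicate (e-1) true).length = 0 := by omega
        simp only [h0, List.getElem_cons_zero]
        simp only [true_iff]
        have : j + 1 = e := by omega
        rw [this]
        exact Finset.mem_insert_self _ _
      · rw [List.getElem_append_right (by omega)]
        have h0 : j - (List.replicate (e-1) true).length = (j - e) + 1 := by omega
        simp only [h0, List.getElem_cons_succ]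
        have hlt : j - e < (wordOfL (f :: l')).length := by
          simp only [List.length_append, List.length_cons, hlen] at h
          omega
        rw [ih (fun x hx => hpos x (by simp [hx])) (j - e) hlt]
        constructor
        · intro hmem
          refine Finset.mem_insert.mpr (Or.inr ?_)
          refine Finset.mem_image.mpr ⟨j - e + 1, hmem, by omega⟩
        · intro hmem
          rcases Finset.mem_insert.mp hmem with hcc | hcc
          · omega
          · obtain ⟨y, hy, hye⟩ := Finset.mem_image.mp hcc
            have : y = j - e + 1 := by omega
            rwa [← this]

lemma sum_take : ∀ (l : List ℕ) (i : ℕ), (l.take i).sum = ∑ j ∈ Finset.range i, l.getD j 0 := by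
  intro l
  induction l with
  | nil => intro i; simp
  | cons a l ih =>
    intro i
    cases i with
    | zero => simp
    | succ i =>
      rw [List.take_succ_cons, List.sum_cons, Finset.sum_range_succ']
      simp only [List.getD_cons_succ, List.getD_cons_zero]
      rw [ih i]
      ring

lemma image_range_succ (n : ℕ) (g : ℕ → ℕ) :
    (Finset.range (n+1)).image g = insert (g 0) ((Finset.range n).image (fun i => g (i+1))) := by
  ext x
  simp only [Finset.mem_image, Finset.mem_range, Finset.mem_insert]
  constructor
  · rintro ⟨i, hi, rfl⟩
    cases i with
    | zero => exact Or.inl rfl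
    | succ i => exact Or.inr ⟨i, by omega, rfl⟩
  · rintro (rfl | ⟨i, hi, rfl⟩)
    · exact ⟨0, by omega, rfl⟩
    · exact ⟨i+1, by omega, rfl⟩

lemma psumsL_eq : ∀ l : List ℕ, (∀ x ∈ l, 0 < x) →
    psumsL l = ((Finset.range l.length).image (fun i => ((l.take (i+1)).sum))).erase l.sum := by
  intro l
  induction l with
  | nil => simp [psumsL]
  | cons e l ih =>
    intro hpos
    have he : 0 < e := hpos e (by simp)
    match l with
    | [] =>
      show (∅ : Finset ℕ) = _
      simp
    | f :: l' =>
      have hps : psumsL (e :: f :: l') = insert e ((psumsL (f :: l')).image (e + ·)) := rfl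
      rw [hps, ih (fun x hx => hpos x (by simp [hx]))]
      have hsumpos : 0 < (f :: l').sum := by
        have := hpos f (by simp)
        simp only [List.sum_cons]
        omega
      rw [show ((e :: f :: l').length) = (f :: l').length + 1 from rfl,
        image_range_succ]
      have h0 : ((e :: f :: l').take (0+1)).sum = e := by simp
      have hsucc : ∀ i, (((e :: f :: l').take (i+1+1)).sum)
          = e + (((f :: l').take (i+1)).sum) := by
        intro i
        rw [List.take_succ_cons, List.sum_cons]
      rw [h0]
      rw [show (fun i => ((e :: f :: l').take (i+1+1)).sum)
            = (fun i => e + (((f :: l').take (i+1)).sum)) from funext hsucc]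
      rw [show (fun i => e + (((f :: l').take (i+1)).sum))
            = ((e + ·) ∘ (fun i => ((f :: l').take (i+1)).sum)) from rfl]
      rw [← Finset.image_image]
      rw [show ((e :: f :: l').sum) = e + (f :: l').sum from rfl]
      rw [Finset.erase_insert_of_ne (by omega)]
      congr 1
      rw [Finset.image_erase (fun a b => by omega)]


lemma image_val_Iic {m : ℕ} (i : Fin (m+1)) :
    (Finset.Iic i).image (Fin.val) = Finset.range (i.val+1) := by
  ext v
  simp only [Finset.mem_image, Finset.mem_Iic, Finset.mem_range]
  constructor
  · rintro ⟨j, hj, rfl⟩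
    have := Fin.le_def.mp hj
    omega
  · intro hv
    exact ⟨⟨v, by omega⟩, Fin.le_def.mpr (by simp; omega), rfl⟩

lemma image_val_univ (m : ℕ) :
    (Finset.univ : Finset (Fin (m+1))).image (Fin.val) = Finset.range (m+1) := by
  ext v
  simp only [Finset.mem_image, Finset.mem_univ, true_and, Finset.mem_range]
  constructor
  · rintro ⟨j, rfl⟩; exact j.isLt
  · intro hv; exact ⟨⟨v, hv⟩, rfl⟩

lemma Iic_sum_eq {m : ℕ} (k : Fin (m+1) → ℕ) (i : Fin (m+1)) :
    ∑ j ∈ Finset.Iic i, k j = ((List.ofFn k).take (i.val+1)).sum := by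
  rw [sum_take, ← image_val_Iic i, Finset.sum_image (by intro x _ y _ h; exact Fin.ext h)]
  refine Finset.sum_congr rfl fun j _ => ?_
  rw [List.getD_eq_getElem _ _ (by have := j.isLt; simp; omega), List.getElem_ofFn]

lemma commaSet_eq {m : ℕ} (k : Fin (m+1) → ℕ) (hpos : ∀ i, 0 < k i) :
    commaSet k = psumsL (List.ofFn k) := by
  have hposl : ∀ x ∈ List.ofFn k, 0 < x := by
    intro x hx
    obtain ⟨i, rfl⟩ := List.mem_ofFn.mp hx
    exact hpos i
  rw [psumsL_eq _ hposl]
  unfold commaSet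
  congr 1
  · have himg : (fun (i : Fin (m+1)) => ∑ j ∈ Finset.Iic i, k j)
        = (fun v => ((List.ofFn k).take (v+1)).sum) ∘ Fin.val := by
      funext i
      exact Iic_sum_eq k i
    rw [himg, ← Finset.image_image, image_val_univ]
    congr 1
    simp
  · rw [← List.sum_ofFn]

lemma wordOfL_not {m m' : ℕ} (k : Fin (m+1) → ℕ) (k' : Fin (m'+1) → ℕ)
    (hk : ∀ i, 0 < k i) (hk' : ∀ i, 0 < k' i)
    (hwt : ∑ i, k' i = ∑ i, k i)
    (hdual : ∀ x : ℕ, x ∈ commaSet k' ↔ (0 < x ∧ x < ∑ i, k i ∧ x ∉ commaSet k)) :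
    wordOfL (List.ofFn k') = (wordOfL (List.ofFn k)).map not := by
  have hposl : ∀ x ∈ List.ofFn k, 0 < x := by
    intro x hx; obtain ⟨i, rfl⟩ := List.mem_ofFn.mp hx; exact hk i
  have hposl' : ∀ x ∈ List.ofFn k', 0 < x := by
    intro x hx; obtain ⟨i, rfl⟩ := List.mem_ofFn.mp hx; exact hk' i
  have hsum : (List.ofFn k).sum = ∑ i, k i := List.sum_ofFn
  have hsum' : (List.ofFn k').sum = ∑ i, k' i := List.sum_ofFn
  have hlen : (wordOfL (List.ofFn k)).length + 1 = ∑ i, k i := by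
    rw [wordOfL_len _ hposl (by simp), hsum]
  have hlen' : (wordOfL (List.ofFn k')).length + 1 = ∑ i, k i := by
    rw [wordOfL_len _ hposl' (by simp), hsum', hwt]
  have hcs : commaSet k = psumsL (List.ofFn k) := commaSet_eq k hk
  have hcs' : commaSet k' = psumsL (List.ofFn k') := commaSet_eq k' hk'
  apply List.ext_getElem
  · rw [List.length_map]; omega
  · intro i h1 h2
    rw [List.getElem_map]
    have h1' : i < (wordOfL (List.ofFn k)).length := by rw [List.length_map] at h2; omega
    have hchar := wordOfL_char (List.ofFn k) hposl i h1'
    have hchar' := wordOfL_char (List.ofFn k') hposl' i h1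
    cases hb : (wordOfL (List.ofFn k))[i] with
    | false =>
      have hmem : i + 1 ∈ commaSet k := by rw [hcs]; exact hchar.mp hb
      have hnot : i + 1 ∉ commaSet k' := fun hc => ((hdual (i+1)).mp hc).2.2 hmem
      cases hb' : (wordOfL (List.ofFn k'))[i] with
      | false => exact absurd (show i + 1 ∈ commaSet k' by
          rw [hcs']; exact hchar'.mp hb') hnot
      | true => rfl
    | true =>
      have hmem : i + 1 ∉ commaSet k := by
        rw [hcs]
        intro hc
        have hfalse := hchar.mpr hc
        rw [hfalse] at hb
        exact Bool.false_ne_true hb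
      have hin : i + 1 ∈ commaSet k' := (hdual (i+1)).mpr ⟨by omega, by omega, hmem⟩
      exact hchar'.mpr (by rw [← hcs']; exact hin)


variable (p : ℕ) [Fact p.Prime]

def Rp : Subring ℚ where
  carrier := {q : ℚ | ¬ (p : ℕ) ∣ q.den}
  one_mem' := by
    intro h
    have hp1 : p = 1 := by simpa using h
    exact absurd hp1 (Fact.out : p.Prime).ne_one
  zero_mem' := by
    intro h
    have hp1 : p = 1 := by simpa using h
    exact absurd hp1 (Fact.out : p.Prime).ne_one
  mul_mem' := by
    intro a b ha hb hab
    rcases ((Fact.out : p.Prime).dvd_mul.mp (dvd_trans hab (Rat.mul_den_dvd a b))) with h | h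
    exacts [ha h, hb h]
  add_mem' := by
    intro a b ha hb hab
    rcases ((Fact.out : p.Prime).dvd_mul.mp (dvd_trans hab (Rat.add_den_dvd a b))) with h | h
    exacts [ha h, hb h]
  neg_mem' := by
    intro a ha h
    rw [Rat.neg_den] at h
    exact ha h

lemma mem_Rp {q : ℚ} : q ∈ Rp p ↔ ¬ (p : ℕ) ∣ q.den := Iff.rfl

lemma den_ne_zero_mod {q : ℚ} (hq : q ∈ Rp p) : ((q.den : ZMod p)) ≠ 0 := by
  rw [Ne, ZMod.natCast_eq_zero_iff]
  exact hq

lemma num_mul_eq (q : ℚ) : (q.num : ℚ) = q * q.den := (Rat.mul_den_eq_num q).symm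

lemma add_cross (q r : ℚ) :
    (q+r).num * (q.den * r.den) = (q.num * r.den + r.num * q.den) * ((q+r).den : ℤ) := by
  have hQ : (((q+r).num * (q.den * r.den) : ℤ) : ℚ)
      = (((q.num * r.den + r.num * q.den) * ((q+r).den : ℤ) : ℤ) : ℚ) := by
    push_cast
    rw [num_mul_eq (q+r), num_mul_eq q, num_mul_eq r]
    ring
  exact_mod_cast hQ

lemma mul_cross (q r : ℚ) :
    (q*r).num * (q.den * r.den) = (q.num * r.num) * ((q*r).den : ℤ) := by
  have hQ : (((q*r).num * (q.den * r.den) : ℤ) : ℚ)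
      = (((q.num * r.num) * ((q*r).den : ℤ) : ℤ) : ℚ) := by
    push_cast
    rw [num_mul_eq (q*r), num_mul_eq q, num_mul_eq r]
    ring
  exact_mod_cast hQ

noncomputable def fRp : Rp p →+* ZMod p where
  toFun x := ((x : ℚ).num : ZMod p) * (((x : ℚ).den : ℕ) : ZMod p)⁻¹
  map_one' := by norm_num
  map_zero' := by norm_num
  map_add' := by
    rintro q r
    have hq := den_ne_zero_mod p q.2
    have hr := den_ne_zero_mod p r.2
    have hs := den_ne_zero_mod p (add_mem q.2 r.2 : ((q:ℚ)+(r:ℚ)) ∈ Rp p)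
    have hz : (((q:ℚ)+(r:ℚ)).num : ZMod p) * (((q:ℚ).den : ℕ) * ((r:ℚ).den : ℕ) : ZMod p)
        = (((q:ℚ).num : ZMod p) * ((r:ℚ).den : ℕ) + ((r:ℚ).num : ZMod p) * ((q:ℚ).den : ℕ))
          * ((((q:ℚ)+(r:ℚ)).den : ℕ) : ZMod p) := by
      have := congrArg (fun z : ℤ => (z : ZMod p)) (add_cross (q:ℚ) (r:ℚ))
      push_cast at this ⊢
      exact this
    show ((((q:ℚ)+(r:ℚ)).num : ZMod p)) * ((((q:ℚ)+(r:ℚ)).den : ℕ) : ZMod p)⁻¹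
      = (((q:ℚ).num : ZMod p)) * (((q:ℚ).den : ℕ) : ZMod p)⁻¹
        + (((r:ℚ).num : ZMod p)) * (((r:ℚ).den : ℕ) : ZMod p)⁻¹
    rw [← div_eq_mul_inv, ← div_eq_mul_inv, ← div_eq_mul_inv,
      div_add_div _ _ hq hr, div_eq_div_iff hs (mul_ne_zero hq hr)]
    linear_combination hz
  map_mul' := by
    rintro q r
    have hq := den_ne_zero_mod p q.2
    have hr := den_ne_zero_mod p r.2
    have hs := den_ne_zero_mod p (mul_mem q.2 r.2 : ((q:ℚ)*(r:ℚ)) ∈ Rp p)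
    have hz : (((q:ℚ)*(r:ℚ)).num : ZMod p) * (((q:ℚ).den : ℕ) * ((r:ℚ).den : ℕ) : ZMod p)
        = (((q:ℚ).num : ZMod p) * ((r:ℚ).num : ZMod p))
          * ((((q:ℚ)*(r:ℚ)).den : ℕ) : ZMod p) := by
      have := congrArg (fun z : ℤ => (z : ZMod p)) (mul_cross (q:ℚ) (r:ℚ))
      push_cast at this ⊢
      exact this
    show ((((q:ℚ)*(r:ℚ)).num : ZMod p)) * ((((q:ℚ)*(r:ℚ)).den : ℕ) : ZMod p)⁻¹
      = ((((q:ℚ).num : ZMod p)) * (((q:ℚ).den : ℕ) : ZMod p)⁻¹)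
        * ((((r:ℚ).num : ZMod p)) * (((r:ℚ).den : ℕ) : ZMod p)⁻¹)
    rw [← div_eq_mul_inv, ← div_eq_mul_inv, ← div_eq_mul_inv,
      div_mul_div_comm, div_eq_div_iff hs (mul_ne_zero hq hr)]
    linear_combination hz

lemma not_dvd_small {j : ℕ} (h1 : 1 ≤ j) (h2 : j < p) : ¬ (p : ℕ) ∣ j := by
  intro h
  have := Nat.le_of_dvd h1 h
  omega

lemma inv_mem_Rp {j : ℕ} (h1 : 1 ≤ j) (h2 : j < p) : ((j : ℚ))⁻¹ ∈ Rp p := by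
  rw [mem_Rp, Rat.inv_natCast_den]
  simp only [show j ≠ 0 by omega, if_false]
  exact not_dvd_small p h1 h2

noncomputable def invR (j : ℕ) : Rp p :=
  if h : 1 ≤ j ∧ j < p then ⟨((j:ℚ))⁻¹, inv_mem_Rp p h.1 h.2⟩ else 0

lemma invR_coe {j : ℕ} (h1 : 1 ≤ j) (h2 : j < p) : ((invR p j : Rp p) : ℚ) = ((j:ℚ))⁻¹ := by
  rw [invR, dif_pos ⟨h1, h2⟩]

lemma fRp_invR {j : ℕ} (h1 : 1 ≤ j) (h2 : j < p) :
    fRp p (invR p j) = ((j : ZMod p))⁻¹ := by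
  show (((invR p j : Rp p) : ℚ).num : ZMod p) * ((((invR p j : Rp p) : ℚ).den : ℕ) : ZMod p)⁻¹ = _
  rw [invR_coe p h1 h2, Rat.inv_natCast_num, Rat.inv_natCast_den]
  simp only [show j ≠ 0 by omega, if_false]
  have : (j : ℤ).sign = 1 := Int.sign_eq_one_of_pos (by exact_mod_cast h1)
  rw [this]
  simp

lemma InPZp_of_fRp_zero (x : Rp p) (hx : fRp p x = 0) : InPZp p (x : ℚ) := by
  have hden : ¬ (p:ℕ) ∣ (x:ℚ).den := x.2
  have hdz := den_ne_zero_mod p x.2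
  have hnum : (((x:ℚ).num : ℤ) : ZMod p) = 0 := by
    have : (((x:ℚ).num : ZMod p)) * (((x:ℚ).den : ℕ) : ZMod p)⁻¹ = 0 := hx
    rcases mul_eq_zero.mp this with h | h
    · exact_mod_cast h
    · exact absurd (inv_eq_zero.mp h) hdz
  obtain ⟨a, ha⟩ := (ZMod.intCast_zmod_eq_zero_iff_dvd _ p).mp hnum
  refine ⟨a, ((x:ℚ).den : ℤ), ?_, ?_⟩
  · rw [Int.natCast_dvd_natCast]
    exact hden
  · push_cast
    rw [mul_comm, Rat.mul_den_eq_num, ha]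
    push_cast
    ring

noncomputable def Phat (m : ℕ) (k : Fin (m+1) → ℕ) : (Rp p)[X] :=
  ∑ n ∈ decTuples (m+1) (p-1), C (∏ i, (invR p (n i))^(k i)) * X ^ (n (Fin.last m))

lemma bounds_of_mem {m : ℕ} {n : Fin (m+1) → ℕ} (hn : n ∈ decTuples (m+1) (p-1)) :
    ∀ i, 1 ≤ n i ∧ n i < p := by
  intro i
  have h := (mem_decTuples.mp hn).1 i
  have := (Fact.out : p.Prime).two_le
  omega

lemma last_eq (m : ℕ) (h : 0 < m + 1) :
    (Fin.last m) = (⟨m + 1 - 1, by omega⟩ : Fin (m+1)) := by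
  apply Fin.ext
  simp

lemma Phat_map_subtype (m : ℕ) (hm : 0 < m + 1) (k : Fin (m+1) → ℕ) :
    (Phat p m k).map (Rp p).subtype = LstarTilde p (m+1) hm k := by
  unfold Phat LstarTilde
  rw [Polynomial.map_sum]
  refine Finset.sum_congr rfl fun n hn => ?_
  rw [Polynomial.map_mul, Polynomial.map_C, Polynomial.map_pow, Polynomial.map_X]
  have hb := bounds_of_mem p hn
  refine congrArg₂ (· * ·) ?_ (by rw [last_eq m hm])
  congr 1
  rw [show ((Rp p).subtype (∏ i, (invR p (n i))^(k i)))
      = ((∏ i, (invR p (n i))^(k i) : Rp p) : ℚ) from rfl]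
  rw [show ((∏ i, (invR p (n i))^(k i) : Rp p) : ℚ)
      = ∏ i, ((invR p (n i) : ℚ))^(k i) by push_cast; rfl]
  rw [show (∏ i, ((invR p (n i) : ℚ))^(k i)) = ∏ i, (((n i : ℚ))⁻¹)^(k i) from
    Finset.prod_congr rfl fun i _ => by rw [invR_coe p (hb i).1 (hb i).2]]
  rw [show (∏ i, (((n i : ℚ))⁻¹)^(k i)) = ∏ i, (((n i : ℚ))^(k i))⁻¹ from
    Finset.prod_congr rfl fun i _ => by rw [inv_pow]]
  rw [Finset.prod_inv_distrib, one_div]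

lemma Phat_map_f (m : ℕ) (k : Fin (m+1) → ℕ) :
    (Phat p m k).map (fRp p) = hh (List.ofFn k) (p-1) := by
  unfold Phat
  rw [Polynomial.map_sum, ← LT (K := ZMod p) m k (p-1)]
  refine Finset.sum_congr rfl fun n hn => ?_
  rw [Polynomial.map_mul, Polynomial.map_C, Polynomial.map_pow, Polynomial.map_X]
  have hb := bounds_of_mem p hn
  congr 2
  rw [map_prod]
  refine Finset.prod_congr rfl fun i _ => ?_
  rw [map_pow, fRp_invR p (hb i).1 (hb i).2]

lemma eval_one_hh (m : ℕ) (k : Fin (m+1) → ℕ) :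
    eval 1 (hh (List.ofFn k) (p-1) : (ZMod p)[X])
      = ∑ n ∈ decTuples (m+1) (p-1), ∏ i, (((n i : ZMod p))⁻¹)^(k i) := by
  rw [← LT (K := ZMod p) m k (p-1), Polynomial.eval_finset_sum]
  refine Finset.sum_congr rfl fun n hn => ?_
  rw [eval_mul, eval_C, eval_pow, eval_X, one_pow, mul_one]

noncomputable def zhat (m : ℕ) (k : Fin (m+1) → ℕ) : Rp p :=
  ∑ n ∈ decTuples (m+1) (p-1), ∏ i, (invR p (n i))^(k i)

lemma zhat_sub (m : ℕ) (k : Fin (m+1) → ℕ) :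
    ((zhat p m k : Rp p) : ℚ)
      = ∑ n ∈ decTuples (m+1) (p-1), (1 : ℚ) / ∏ i, (n i : ℚ) ^ (k i) := by
  unfold zhat
  rw [show (((∑ n ∈ decTuples (m+1) (p-1), ∏ i, (invR p (n i))^(k i) : Rp p)) : ℚ)
      = ∑ n ∈ decTuples (m+1) (p-1), (((∏ i, (invR p (n i))^(k i) : Rp p)) : ℚ) by
    push_cast; rfl]
  refine Finset.sum_congr rfl fun n hn => ?_
  have hb := bounds_of_mem p hn
  rw [show ((∏ i, (invR p (n i))^(k i) : Rp p) : ℚ)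
      = ∏ i, ((invR p (n i) : ℚ))^(k i) by push_cast; rfl]
  rw [show (∏ i, ((invR p (n i) : ℚ))^(k i)) = ∏ i, (((n i : ℚ))^(k i))⁻¹ from
    Finset.prod_congr rfl fun i _ => by rw [invR_coe p (hb i).1 (hb i).2, inv_pow]]
  rw [Finset.prod_inv_distrib, one_div]

lemma zhat_f (m : ℕ) (k : Fin (m+1) → ℕ) :
    fRp p (zhat p m k) = eval 1 (hh (List.ofFn k) (p-1) : (ZMod p)[X]) := by
  unfold zhat
  rw [eval_one_hh, map_sum]
  refine Finset.sum_congr rfl fun n hn => ?_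
  have hb := bounds_of_mem p hn
  rw [map_prod]
  refine Finset.prod_congr rfl fun i _ => ?_
  rw [map_pow, fRp_invR p (hb i).1 (hb i).2]

end HDual

/-- For a prime `p` and an index `𝕜` with Hoffman dual `𝕜^∨` (characterized via comma sets),
`£̃^⋆_{p,𝕜}(t) ≡ £̃^⋆_{p,𝕜^∨}(1 - t) - ζ^⋆_p(𝕜^∨) (mod p)`, as polynomials in `ℤ_(p)[t]`
with coefficients compared modulo `p`. -/
theorem tilde_hoffman_dual_congr (p m m' : ℕ) (hp : p.Prime) (hm : 0 < m) (hm' : 0 < m')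
    (k : Fin m → ℕ) (k' : Fin m' → ℕ) (hk : ∀ i, 0 < k i) (hk' : ∀ i, 0 < k' i)
    (hwt : ∑ i, k' i = ∑ i, k i)
    (hdual : ∀ x : ℕ, x ∈ commaSet k' ↔ (0 < x ∧ x < ∑ i, k i ∧ x ∉ commaSet k)) :
    ∀ d : ℕ, InPZp p
      ((LstarTilde p m hm k
        - ((LstarTilde p m' hm' k').comp (1 - X)
            - C (∑ n ∈ decTuples m' (p - 1), (1 : ℚ) / ∏ i, (n i : ℚ) ^ (k' i)))).coeff d) := by
  haveI : Fact p.Prime := ⟨hp⟩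
  obtain ⟨m1, rfl⟩ : ∃ a, m = a + 1 := ⟨m - 1, by omega⟩
  obtain ⟨m1', rfl⟩ : ∃ a, m' = a + 1 := ⟨m' - 1, by omega⟩
  intro d
  set Ehat : (HDual.Rp p)[X] := HDual.Phat p m1 k
    - ((HDual.Phat p m1' k').comp (1 - X) - C (HDual.zhat p m1' k')) with hEhat
  have hsub : Ehat.map (HDual.Rp p).subtype
      = LstarTilde p (m1+1) hm k
        - ((LstarTilde p (m1'+1) hm' k').comp (1 - X)
            - C (∑ n ∈ decTuples (m1'+1) (p - 1), (1 : ℚ) / ∏ i, (n i : ℚ) ^ (k' i))) := by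
    rw [hEhat, Polynomial.map_sub, Polynomial.map_sub, Polynomial.map_comp,
      Polynomial.map_sub, Polynomial.map_one, Polynomial.map_X, Polynomial.map_C,
      HDual.Phat_map_subtype p m1 hm k, HDual.Phat_map_subtype p m1' hm' k']
    rw [show ((HDual.Rp p).subtype (HDual.zhat p m1' k')) = ((HDual.zhat p m1' k' : HDual.Rp p) : ℚ) from rfl,
      HDual.zhat_sub]
  have hposk : ∀ x ∈ List.ofFn k, 0 < x := by
    intro x hx; obtain ⟨i, rfl⟩ := List.mem_ofFn.mp hx; exact hk i
  have hposk' : ∀ x ∈ List.ofFn k', 0 < x := by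
    intro x hx; obtain ⟨i, rfl⟩ := List.mem_ofFn.mp hx; exact hk' i
  have hword : HDual.wordOfL (List.ofFn k') = (HDual.wordOfL (List.ofFn k)).map not :=
    HDual.wordOfL_not k k' hk hk' hwt hdual
  have hf : Ehat.map (HDual.fRp p) = 0 := by
    rw [hEhat, Polynomial.map_sub, Polynomial.map_sub, Polynomial.map_comp,
      Polynomial.map_sub, Polynomial.map_one, Polynomial.map_X, Polynomial.map_C,
      HDual.Phat_map_f p m1 k, HDual.Phat_map_f p m1' k', HDual.zhat_f p m1' k']
    rw [HDual.hh_eq_SS (List.ofFn k) hposk (by simp) (p-1),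
      HDual.hh_eq_SS (List.ofFn k') hposk' (by simp) (p-1), hword]
    rw [← HDual.main p (HDual.wordOfL (List.ofFn k))]
    exact sub_self _
  rw [← hsub, Polynomial.coeff_map]
  have hc : (HDual.fRp p) (Ehat.coeff d) = 0 := by
    have := congrArg (fun q => Polynomial.coeff q d) hf
    simpa [Polynomial.coeff_map] using this
  exact HDual.InPZp_of_fRp_zero p _ hc
end

section
/- Let L be a finite extension of $\mathbb{Q}_p$ with uniformizer $\pi$ and normalized valuation $v_L$ ($v_L(\pi)=1$). Let $x = 1 + \sum_{n \ge n_0} a_n \pi^n$ be a principal unit of L, where each $a_n$ is either 0 or a root of unity in L of order prime to p, and $n_0$ is the minimal positive integer with $a_{n_0} \neq 0$. If $p \nmid n_0$ and $n_0 < v_L(p)$, then x has no p-th root in L. -/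
/-- Let `O` be the ring of integers of a finite extension `L` of `ℚ_p`, abstracted as a
complete discrete valuation ring of characteristic zero with uniformizer `π` and residue
characteristic `p`, and let `L` be its fraction field.  Let
`x = 1 + ∑_{n ≥ n₀} a_n π^n` be a principal unit whose `π`-adic coefficients `a_n` are `0` or
roots of unity of order prime to `p`, `n₀` being the least positive index with `a_{n₀} ≠ 0`
(the series is expressed by the condition that `x` agrees with every partial sum modulo the
corresponding power of `π`).  If `p ∤ n₀` and `n₀ < v_L(p)` (i.e. `π^(n₀+1) ∣ p`), then `x`
has no `p`-th root in `L`. -/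
theorem no_pth_root (p : ℕ) (hp : p.Prime)
    (O : Type*) [CommRing O] [IsDomain O] [IsDiscreteValuationRing O] [CharZero O]
    (π : O) (hπ : Irreducible π) (hcompl : IsAdicComplete (Ideal.span {π}) O)
    (n₀ : ℕ) (hn₀ : 0 < n₀) (a : ℕ → O)
    (ha : ∀ n, a n = 0 ∨ ∃ k : ℕ, 0 < k ∧ ¬ p ∣ k ∧ a n ^ k = 1)
    (hlow : ∀ n < n₀, a n = 0) (hne : a n₀ ≠ 0)
    (x : O) (hxu : IsUnit x)
    (hx : ∀ N : ℕ, x - (1 + ∑ n ∈ Finset.range N, a n * π ^ n) ∈ Ideal.span {π ^ N})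
    (hn₀p : ¬ p ∣ n₀) (hval : π ^ (n₀ + 1) ∣ (p : O)) :
    ¬ ∃ y : FractionRing O, y ^ p = algebraMap O (FractionRing O) x := by
  rintro ⟨y, hy⟩
  have hπp : Prime π := hπ.prime
  have hπ0 : π ≠ 0 := hπ.ne_zero
  -- helper: π^(k+1) does not divide (unit) * π^k
  have helper : ∀ (k : ℕ) (u : O), IsUnit u → ¬ π ^ (k + 1) ∣ u * π ^ k := by
    rintro k u hu ⟨c, hc⟩
    have heq : u = π * c := by
      apply mul_right_cancel₀ (pow_ne_zero k hπ0)
      rw [hc]; ring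
    exact hπ.not_isUnit (isUnit_of_dvd_unit ⟨c, heq⟩ hu)
  -- get z : O with z ^ p = x
  obtain ⟨z, hzy⟩ : ∃ z : O, algebraMap O (FractionRing O) z = y := by
    refine IsIntegrallyClosed.isIntegral_iff.mp ?_
    refine ⟨Polynomial.X ^ p - Polynomial.C x, ?_, ?_⟩
    · exact Polynomial.monic_X_pow_sub_C _ hp.ne_zero
    · simp [hy]
  have hz : z ^ p = x := by
    apply IsFractionRing.injective O (FractionRing O)
    rw [map_pow, hzy, hy]
  -- π^n₀ ∣ x - 1
  have hA : π ^ n₀ ∣ x - 1 := by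
    have h := hx n₀
    rw [Ideal.mem_span_singleton] at h
    have hs : ∑ n ∈ Finset.range n₀, a n * π ^ n = 0 :=
      Finset.sum_eq_zero fun n hn => by
        rw [hlow n (Finset.mem_range.mp hn), zero_mul]
    rwa [hs, add_zero] at h
  -- ¬ π^(n₀+1) ∣ x - 1
  have hB : ¬ π ^ (n₀ + 1) ∣ x - 1 := by
    intro hdvd
    have h := hx (n₀ + 1)
    rw [Ideal.mem_span_singleton] at h
    have hs : ∑ n ∈ Finset.range (n₀ + 1), a n * π ^ n = a n₀ * π ^ n₀ := by
      rw [Finset.sum_range_succ,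
        Finset.sum_eq_zero fun n hn => by
          rw [hlow n (Finset.mem_range.mp hn), zero_mul], zero_add]
    rw [hs] at h
    have hdvd2 : π ^ (n₀ + 1) ∣ a n₀ * π ^ n₀ := by
      have he : a n₀ * π ^ n₀ = (x - 1) - (x - (1 + a n₀ * π ^ n₀)) := by ring
      rw [he]
      exact dvd_sub hdvd h
    have hu : IsUnit (a n₀) := by
      rcases ha n₀ with h0 | ⟨k, hk0, _, hk1⟩
      · exact absurd h0 hne
      · exact IsUnit.of_pow_eq_one hk1 hk0.ne'
    exact helper n₀ (a n₀) hu hdvd2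
  -- the binomial decomposition: x - 1 = t^p + p * t * d
  set t := z - 1 with ht
  have key : ∃ d : O, x - 1 = t ^ p + (p : O) * t * d := by
    have hb := add_pow_prime_eq hp t 1
    rw [show t + 1 = z by ring, hz, one_pow] at hb
    have htS : t ∣ ∑ k ∈ Finset.Ioo 0 p, t ^ k * 1 ^ (p - k) * ((p.choose k / p : ℕ) : O) :=
      Finset.dvd_sum fun k hk =>
        Dvd.dvd.mul_right (Dvd.dvd.mul_right
          (dvd_pow_self t (Finset.mem_Ioo.mp hk).1.ne') _) _
    obtain ⟨d, hdS⟩ := htS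
    exact ⟨∑ k ∈ Finset.Ioo 0 p, t ^ (k - 1) * 1 ^ (p - k - 1) * ((p.choose k / p : ℕ) : O), by rw [hb]; ring⟩
  obtain ⟨d, hd⟩ := key
  have hπ1 : π ^ 1 ∣ (p : O) := dvd_trans (pow_dvd_pow π (by omega)) hval
  rw [pow_one] at hπ1
  -- π ∣ t
  have hπt : π ∣ t := by
    have h1 : π ∣ x - 1 := dvd_trans (dvd_pow_self π hn₀.ne') hA
    have h3 : π ∣ t ^ p := by
      have he : t ^ p = (x - 1) - (p : O) * t * d := by rw [hd]; ring
      rw [he]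
      exact dvd_sub h1 ((hπ1.mul_right t).mul_right d)
    exact hπp.dvd_of_dvd_pow h3
  have ht0 : t ≠ 0 := by
    intro h0
    apply hB
    have he : x - 1 = 0 := by rw [hd, h0]; simp [zero_pow hp.ne_zero]
    rw [he]
    exact dvd_zero _
  obtain ⟨m, u, hu⟩ := IsDiscreteValuationRing.eq_unit_mul_pow_irreducible ht0 hπ
  have hm1 : 1 ≤ m := by
    by_contra h
    have hm0 : m = 0 := by omega
    rw [hu, hm0, pow_zero, mul_one] at hπt
    exact hπ.not_isUnit (isUnit_of_dvd_unit hπt u.isUnit)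
  have htp : t ^ p = (u : O) ^ p * π ^ (p * m) := by
    rw [hu, mul_pow, ← pow_mul, mul_comm m p]
  rcases le_or_gt (p * m) n₀ with hle | hlt
  · -- then v(x-1) = p*m, forcing n₀ = p*m, contradiction with p ∤ n₀
    have h1 : π ^ (n₀ + 1 + m) ∣ (p : O) * t * d := by
      rw [pow_add, hu]
      exact (mul_dvd_mul hval (dvd_mul_left _ _)).mul_right d
    have hptd : π ^ (p * m + 1) ∣ (p : O) * t * d :=
      dvd_trans (pow_dvd_pow π ((Nat.add_le_add_right hle 1).trans (Nat.le_add_right _ m))) h1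
    have hnd : ¬ π ^ (p * m + 1) ∣ x - 1 := by
      intro hdd
      have h2 : π ^ (p * m + 1) ∣ (u : O) ^ p * π ^ (p * m) := by
        have he : (u : O) ^ p * π ^ (p * m) = (x - 1) - (p : O) * t * d := by
          rw [hd, htp]; ring
        rw [he]
        exact dvd_sub hdd hptd
      exact helper _ _ (u.isUnit.pow p) h2
    rcases lt_or_eq_of_le hle with h | h
    · exact hnd (dvd_trans (pow_dvd_pow π (Nat.succ_le_of_lt h)) hA)
    · exact hn₀p ⟨m, h.symm⟩
  · -- then π^(n₀+1) ∣ x - 1, contradiction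
    apply hB
    rw [hd, htp]
    exact dvd_add ((dvd_trans (pow_dvd_pow π (Nat.succ_le_of_lt hlt))
      (dvd_mul_left _ _))) ((hval.mul_right t).mul_right d)
end
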